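/- arXiv:2510.17216 — 2 statements merged into one kernel-verified Lean document; each statement's English description precedes it below -/
import Mathlib

section
/- Under the hypotheses of Theorem 3.3 (so that the (m,k)-Hom-crossed product multiplication makes A ⊗ H a monoidal Hom-algebra and the m-Hom-smash coproduct makes A ⊗ H a monoidal Hom-coalgebra, with σ a twisted comodule cocycle), suppose the comultiplication Δ of the smash coproduct satisfies Δ((a♯1_H)(b♯1_H)) = Δ(a♯1_H)Δ(b♯1_H), Δ((a♯1_H)(1_A♯g)) = Δ(a♯1_H)Δ(1_A♯g), Δ((1_A♯h)(b♯1_H)) = Δ(1_A♯h)Δ(b♯1_H), and Δ((1_A♯h)(1_A♯g)) = Δ(1_A♯h)Δ(1_A♯g) for all a, b ∈ A and h, g ∈ H. Then Δ((a♯h)(b♯g)) = Δ(a♯h)Δ(b♯g) for all a, b ∈ A and h, g ∈ H. -/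
open TensorProduct

noncomputable section

/-- A monoidal Hom-algebra `(A, β)`. -/
structure HomAlgebraStr (K : Type*) (A : Type*) [Field K] [AddCommGroup A] [Module K A] where
  mul : A →ₗ[K] A →ₗ[K] A
  one : A
  str : A ≃ₗ[K] A
  hom_assoc : ∀ a b c : A, mul (str a) (mul b c) = mul (mul a b) (str c)
  str_mul : ∀ a b : A, str (mul a b) = mul (str a) (str b)
  mul_one : ∀ a : A, mul a one = str a
  one_mul : ∀ a : A, mul one a = str a
  str_one : str one = one

/-- A monoidal Hom-coalgebra `(C, γ)`. -/
structure HomCoalgebraStr (K : Type*) (C : Type*) [Field K] [AddCommGroup C] [Module K C] where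
  comul : C →ₗ[K] C ⊗[K] C
  counit : C →ₗ[K] K
  str : C ≃ₗ[K] C
  hom_coassoc : ∀ c : C,
    TensorProduct.map str.symm.toLinearMap comul (comul c)
      = TensorProduct.assoc K C C C (TensorProduct.map comul str.symm.toLinearMap (comul c))
  comul_str : ∀ c : C, comul (str c) = TensorProduct.map str.toLinearMap str.toLinearMap (comul c)
  counit_comul_left : ∀ c : C,
    TensorProduct.lid K C (TensorProduct.map counit (LinearMap.id : C →ₗ[K] C) (comul c)) = str.symm c
  counit_comul_right : ∀ c : C,
    TensorProduct.rid K C (TensorProduct.map (LinearMap.id : C →ₗ[K] C) counit (comul c)) = str.symm c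
  counit_str : ∀ c : C, counit (str c) = counit c

/-- The componentwise multiplication on `N ⊗ N` induced by a bilinear multiplication on `N`. -/
def tensorSquareMul {K N : Type*} [Field K] [AddCommGroup N] [Module K N]
    (mul : N →ₗ[K] N →ₗ[K] N) :
    (N ⊗[K] N) →ₗ[K] (N ⊗[K] N) →ₗ[K] (N ⊗[K] N) :=
  TensorProduct.curry
    ((TensorProduct.map (TensorProduct.lift mul) (TensorProduct.lift mul)) ∘ₗ
      (TensorProduct.tensorTensorTensorComm K N N N N).toLinearMap)

/-- A monoidal Hom-bialgebra `(H, α)`. -/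
structure HomBialgebraStr (K : Type*) (H : Type*) [Field K] [AddCommGroup H] [Module K H]
    extends HomAlgebraStr K H where
  comul : H →ₗ[K] H ⊗[K] H
  counit : H →ₗ[K] K
  hom_coassoc : ∀ c : H,
    TensorProduct.map str.symm.toLinearMap comul (comul c)
      = TensorProduct.assoc K H H H (TensorProduct.map comul str.symm.toLinearMap (comul c))
  comul_str : ∀ c : H, comul (str c) = TensorProduct.map str.toLinearMap str.toLinearMap (comul c)
  counit_comul_left : ∀ c : H,
    TensorProduct.lid K H (TensorProduct.map counit (LinearMap.id : H →ₗ[K] H) (comul c)) = str.symm c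
  counit_comul_right : ∀ c : H,
    TensorProduct.rid K H (TensorProduct.map (LinearMap.id : H →ₗ[K] H) counit (comul c)) = str.symm c
  counit_str : ∀ c : H, counit (str c) = counit c
  comul_mul : ∀ a b : H, comul (mul a b) = tensorSquareMul mul (comul a) (comul b)
  comul_one : comul one = one ⊗ₜ[K] one
  counit_mul : ∀ a b : H, counit (mul a b) = counit a * counit b
  counit_one : counit one = 1

/-- A monoidal Hom-Hopf algebra `(H, α, S)`. -/
structure HomHopfStr (K : Type*) (H : Type*) [Field K] [AddCommGroup H] [Module K H]
    extends HomBialgebraStr K H where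
  antipode : H →ₗ[K] H
  antipode_str : ∀ h : H, antipode (str h) = str (antipode h)
  antipode_mul_left : ∀ h : H,
    TensorProduct.lift (mul ∘ₗ antipode) (comul h) = counit h • one
  antipode_mul_right : ∀ h : H,
    TensorProduct.lift (mul.compl₂ antipode) (comul h) = counit h • one

section Defs

variable {K H A C M : Type*} [Field K]
variable [AddCommGroup H] [Module K H] [AddCommGroup A] [Module K A]
variable [AddCommGroup C] [Module K C] [AddCommGroup M] [Module K M]

/-- `(A, β)` is a left weak `(H, α)`-Hom-module algebra via `act`:
`h·(ab) = (h₁·a)(h₂·b)` and `h·1 = ε(h)1`. -/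
structure IsWeakModuleAlgebra (HB : HomBialgebraStr K H) (AA : HomAlgebraStr K A)
    (act : H →ₗ[K] A →ₗ[K] A) : Prop where
  act_mul : ∀ (h : H) (a b : A),
    act h (AA.mul a b)
      = TensorProduct.lift AA.mul
          (TensorProduct.map (TensorProduct.lift act) (TensorProduct.lift act)
            (TensorProduct.map ((TensorProduct.mk K H A).flip a) ((TensorProduct.mk K H A).flip b)
              (HB.comul h)))
  act_one : ∀ h : H, act h AA.one = HB.counit h • AA.one

/-- `(C, β)` is a left `(H, α)`-Hom-comodule coalgebra via `coact a = a₍₋₁₎ ⊗ a₍₀₎`. -/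
structure IsComoduleCoalgebra (HB : HomBialgebraStr K H) (CC : HomCoalgebraStr K C)
    (coact : C →ₗ[K] H ⊗[K] C) : Prop where
  comodule_coassoc : ∀ c : C,
    TensorProduct.assoc K H H C
        (TensorProduct.map HB.comul CC.str.symm.toLinearMap (coact c))
      = TensorProduct.map HB.str.symm.toLinearMap coact (coact c)
  coact_str : ∀ c : C,
    coact (CC.str c) = TensorProduct.map HB.str.toLinearMap CC.str.toLinearMap (coact c)
  counit_coact : ∀ c : C,
    TensorProduct.lid K C (TensorProduct.map HB.counit (LinearMap.id : C →ₗ[K] C) (coact c))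
      = CC.str.symm c
  coact_comul : ∀ c : C,
    TensorProduct.map (LinearMap.id : H →ₗ[K] H) CC.comul (coact c)
      = TensorProduct.map (TensorProduct.lift HB.mul) (LinearMap.id : C ⊗[K] C →ₗ[K] C ⊗[K] C)
          (TensorProduct.tensorTensorTensorComm K H C H C
            (TensorProduct.map coact coact (CC.comul c)))
  counit_coact_one : ∀ c : C,
    TensorProduct.rid K H (TensorProduct.map (LinearMap.id : H →ₗ[K] H) CC.counit (coact c))
      = CC.counit c • HB.one

/-- The `(m,k)`-Hom-crossed product multiplication on simple tensors:
`(a ♯ h)(b ♯ g) = a[(α^m(h₁₁)·β⁻²(b)) σ(α^{k+1}(h₁₂), α^k(g₁))] ♯ α(h₂g₂)`. -/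
def cpMulElem (HB : HomBialgebraStr K H) (AA : HomAlgebraStr K A)
    (act : H →ₗ[K] A →ₗ[K] A) (σ : H →ₗ[K] H →ₗ[K] A) (m k : ℤ)
    (a : A) (h : H) (b : A) (g : H) : A ⊗[K] H :=
  TensorProduct.map
    ((AA.mul a) ∘ₗ TensorProduct.lift AA.mul ∘ₗ
      TensorProduct.map
        ((act.flip ((AA.str ^ (-2 : ℤ)) b)) ∘ₗ (HB.str ^ m).toLinearMap)
        (TensorProduct.lift σ ∘ₗ
          TensorProduct.map (HB.str ^ (k+1)).toLinearMap (HB.str ^ k).toLinearMap) ∘ₗ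
      (TensorProduct.assoc K H H H).toLinearMap)
    (HB.str.toLinearMap ∘ₗ TensorProduct.lift HB.mul)
    (TensorProduct.map (TensorProduct.map HB.comul (LinearMap.id : H →ₗ[K] H))
      (LinearMap.id : H ⊗[K] H →ₗ[K] H ⊗[K] H)
      (TensorProduct.tensorTensorTensorComm K H H H H (HB.comul h ⊗ₜ[K] HB.comul g)))

/-- The `m`-Hom-smash product multiplication on simple tensors:
`(a ♯ h)(b ♯ g) = a(α^m(h₁)·β⁻¹(b)) ♯ α(h₂)g`. -/
def smashMulElem (HB : HomBialgebraStr K H) (AA : HomAlgebraStr K A)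
    (act : H →ₗ[K] A →ₗ[K] A) (m : ℤ) (a : A) (h : H) (b : A) (g : H) : A ⊗[K] H :=
  TensorProduct.map
    ((AA.mul a) ∘ₗ (act.flip ((AA.str ^ (-1 : ℤ)) b)) ∘ₗ (HB.str ^ m).toLinearMap)
    ((HB.mul.flip g) ∘ₗ HB.str.toLinearMap)
    (HB.comul h)

/-- The `m`-Hom-smash coproduct comultiplication on simple tensors:
`Δ(a ⋊ h) = (a₁ ⋊ α^m(a₂₍₋₁₎)α⁻¹(h₁)) ⊗ (β(a₂₍₀₎) ⋊ h₂)`. -/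
def scComulElem (HB : HomBialgebraStr K H) (AC : HomCoalgebraStr K A)
    (coact : A →ₗ[K] H ⊗[K] A) (m : ℤ) (a : A) (h : H) :
    (A ⊗[K] H) ⊗[K] (A ⊗[K] H) :=
  TensorProduct.map
    (TensorProduct.map (LinearMap.id : A →ₗ[K] A)
        (TensorProduct.lift HB.mul ∘ₗ
          TensorProduct.map (HB.str ^ m).toLinearMap (HB.str ^ (-1 : ℤ)).toLinearMap) ∘ₗ
      (TensorProduct.assoc K A H H).toLinearMap)
    (TensorProduct.map AC.str.toLinearMap (LinearMap.id : H →ₗ[K] H))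
    (TensorProduct.tensorTensorTensorComm K (A ⊗[K] H) A H H
      ((TensorProduct.assoc K A H A).symm
          (TensorProduct.map (LinearMap.id : A →ₗ[K] A) coact (AC.comul a)) ⊗ₜ[K] HB.comul h))

/-- Condition (1) of Theorem 2.3. -/
def CPCond1 (HB : HomBialgebraStr K H) (AA : HomAlgebraStr K A)
    (σ : H →ₗ[K] H →ₗ[K] A) : Prop :=
  (∀ h : H, σ h HB.one = HB.counit h • AA.one) ∧
  (∀ h : H, σ HB.one h = HB.counit h • AA.one) ∧
  (∀ h g : H, σ (HB.str h) (HB.str g) = AA.str (σ h g))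

/-- Condition (2) of Theorem 2.3:
`[α^m(h₁l₁)·a] σ(α^{k+2}(h₂), α^{k+2}(l₂)) = σ(α^{k+2}(h₁), α^{k+2}(l₁)) [α^m(h₂l₂)·a]`. -/
def CPCond2 (HB : HomBialgebraStr K H) (AA : HomAlgebraStr K A)
    (act : H →ₗ[K] A →ₗ[K] A) (σ : H →ₗ[K] H →ₗ[K] A) (m k : ℤ) : Prop :=
  ∀ (h l : H) (a : A),
    TensorProduct.lift AA.mul
      (TensorProduct.map
        ((act.flip a) ∘ₗ (HB.str ^ m).toLinearMap ∘ₗ TensorProduct.lift HB.mul)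
        (TensorProduct.lift σ ∘ₗ
          TensorProduct.map (HB.str ^ (k+2)).toLinearMap (HB.str ^ (k+2)).toLinearMap)
        (TensorProduct.tensorTensorTensorComm K H H H H (HB.comul h ⊗ₜ[K] HB.comul l)))
    =
    TensorProduct.lift AA.mul
      (TensorProduct.map
        (TensorProduct.lift σ ∘ₗ
          TensorProduct.map (HB.str ^ (k+2)).toLinearMap (HB.str ^ (k+2)).toLinearMap)
        ((act.flip a) ∘ₗ (HB.str ^ m).toLinearMap ∘ₗ TensorProduct.lift HB.mul)
        (TensorProduct.tensorTensorTensorComm K H H H H (HB.comul h ⊗ₜ[K] HB.comul l)))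

/-- Condition (3) of Theorem 2.3:
`[α^{m+1}(h₁)·σ(α^{k+1}(l₁), α^{k+1}(g₁))] σ(α^{k+2}(h₂), α^{k+1}(l₂g₂))
  = σ(α^{k+2}(h₁), α^{k+2}(l₁)) σ(α^{k+1}(h₂l₂), α^{k+1}(g))`. -/
def CPCond3 (HB : HomBialgebraStr K H) (AA : HomAlgebraStr K A)
    (act : H →ₗ[K] A →ₗ[K] A) (σ : H →ₗ[K] H →ₗ[K] A) (m k : ℤ) : Prop :=
  ∀ h l g : H,
    TensorProduct.lift AA.mul
      (TensorProduct.map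
        (TensorProduct.lift act ∘ₗ
          TensorProduct.map (HB.str ^ (m+1)).toLinearMap
            (TensorProduct.lift σ ∘ₗ
              TensorProduct.map (HB.str ^ (k+1)).toLinearMap (HB.str ^ (k+1)).toLinearMap))
        (TensorProduct.lift σ ∘ₗ
          TensorProduct.map (HB.str ^ (k+2)).toLinearMap
            ((HB.str ^ (k+1)).toLinearMap ∘ₗ TensorProduct.lift HB.mul))
        (TensorProduct.tensorTensorTensorComm K H H (H ⊗[K] H) (H ⊗[K] H)
          (HB.comul h ⊗ₜ[K]
            (TensorProduct.tensorTensorTensorComm K H H H H (HB.comul l ⊗ₜ[K] HB.comul g)))))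
    =
    TensorProduct.lift AA.mul
      (TensorProduct.map
        (TensorProduct.lift σ ∘ₗ
          TensorProduct.map (HB.str ^ (k+2)).toLinearMap (HB.str ^ (k+2)).toLinearMap)
        ((σ.flip ((HB.str ^ (k+1)) g)) ∘ₗ (HB.str ^ (k+1)).toLinearMap ∘ₗ TensorProduct.lift HB.mul)
        (TensorProduct.tensorTensorTensorComm K H H H H (HB.comul h ⊗ₜ[K] HB.comul l)))

/-- `σ` is a twisted comodule cocycle:
`β(a₁) ⊗ α^{m+1}(a₂₍₋₁₎)g ⊗ a₂₍₀₎
  = a₁σ(α^{k+m+2}(a₂₍₋₁₎₁), α^{k+1}(g₁)) ⊗ α^{m+2}(a₂₍₋₁₎₂)α(g₂) ⊗ a₂₍₀₎`. -/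
def IsTwistedCocycle (HB : HomBialgebraStr K H) (AA : HomAlgebraStr K A)
    (AC : HomCoalgebraStr K A) (coact : A →ₗ[K] H ⊗[K] A)
    (σ : H →ₗ[K] H →ₗ[K] A) (m k : ℤ) : Prop :=
  ∀ (a : A) (g : H),
    (TensorProduct.assoc K A H A).symm
      (TensorProduct.map AA.str.toLinearMap
        (TensorProduct.map ((HB.mul.flip g) ∘ₗ (HB.str ^ (m+1)).toLinearMap)
          (LinearMap.id : A →ₗ[K] A))
        (TensorProduct.map (LinearMap.id : A →ₗ[K] A) coact (AC.comul a)))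
    =
    TensorProduct.map
      (TensorProduct.map (TensorProduct.lift AA.mul) (LinearMap.id : H →ₗ[K] H)
        ∘ₗ (TensorProduct.assoc K A A H).symm.toLinearMap
        ∘ₗ TensorProduct.map (LinearMap.id : A →ₗ[K] A)
            (TensorProduct.map
              (TensorProduct.lift σ ∘ₗ
                TensorProduct.map (HB.str ^ (k+m+2)).toLinearMap (HB.str ^ (k+1)).toLinearMap)
              (TensorProduct.lift HB.mul ∘ₗ
                TensorProduct.map (HB.str ^ (m+2)).toLinearMap HB.str.toLinearMap)
            ∘ₗ (TensorProduct.tensorTensorTensorComm K H H H H).toLinearMap)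
        ∘ₗ (TensorProduct.assoc K A (H ⊗[K] H) (H ⊗[K] H)).toLinearMap)
      (LinearMap.id : A →ₗ[K] A)
      ((TensorProduct.assoc K (A ⊗[K] (H ⊗[K] H)) (H ⊗[K] H) A).symm
        (TensorProduct.map (LinearMap.id : A ⊗[K] (H ⊗[K] H) →ₗ[K] A ⊗[K] (H ⊗[K] H))
          (TensorProduct.comm K A (H ⊗[K] H)).toLinearMap
          (TensorProduct.assoc K (A ⊗[K] (H ⊗[K] H)) A (H ⊗[K] H)
            ((TensorProduct.assoc K A (H ⊗[K] H) A).symm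
                (TensorProduct.map (LinearMap.id : A →ₗ[K] A)
                  (TensorProduct.map HB.comul (LinearMap.id : A →ₗ[K] A))
                  (TensorProduct.map (LinearMap.id : A →ₗ[K] A) coact (AC.comul a)))
              ⊗ₜ[K] HB.comul g))))

/-- Auxiliary map `(n ⊗ w) ⊗ t ↦ (α^j(n)·t) ⊗ f(w)` on `(H ⊗ M) ⊗ H`. -/
def coactMulAux (HB : HomBialgebraStr K H) (j : ℤ) (f : M →ₗ[K] M) :
    (H ⊗[K] M) ⊗[K] H →ₗ[K] H ⊗[K] M :=
  TensorProduct.map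
      (TensorProduct.lift HB.mul ∘ₗ
        TensorProduct.map (HB.str ^ j).toLinearMap (LinearMap.id : H →ₗ[K] H)) f
    ∘ₗ (TensorProduct.assoc K H H M).symm.toLinearMap
    ∘ₗ TensorProduct.map (LinearMap.id : H →ₗ[K] H) (TensorProduct.comm K M H).toLinearMap
    ∘ₗ (TensorProduct.assoc K H M H).toLinearMap

/-- (A1): `ε_A` is an algebra map. -/
def CondA1 (AA : HomAlgebraStr K A) (AC : HomCoalgebraStr K A) : Prop :=
  (∀ a b : A, AC.counit (AA.mul a b) = AC.counit a * AC.counit b) ∧ AC.counit AA.one = 1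

/-- (A2): `ε_A(h·a) = ε_H(h)ε_A(a)`. -/
def CondA2 (HB : HomBialgebraStr K H) (AC : HomCoalgebraStr K A)
    (act : H →ₗ[K] A →ₗ[K] A) : Prop :=
  ∀ (h : H) (a : A), AC.counit (act h a) = HB.counit h * AC.counit a

/-- (A3): `σ` is a coalgebra map. -/
def CondA3 (HB : HomBialgebraStr K H) (AC : HomCoalgebraStr K A)
    (σ : H →ₗ[K] H →ₗ[K] A) : Prop :=
  (∀ h g : H,
    AC.comul (σ h g)
      = TensorProduct.map (TensorProduct.lift σ) (TensorProduct.lift σ)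
          (TensorProduct.tensorTensorTensorComm K H H H H (HB.comul h ⊗ₜ[K] HB.comul g))) ∧
  (∀ h g : H, AC.counit (σ h g) = HB.counit h * HB.counit g)

/-- (A4): `Δ_A(1_A) = 1_A ⊗ 1_A`. -/
def CondA4 (AA : HomAlgebraStr K A) (AC : HomCoalgebraStr K A) : Prop :=
  AC.comul AA.one = AA.one ⊗ₜ[K] AA.one

/-- (A5): the coaction is an algebra map. -/
def CondA5 (HB : HomBialgebraStr K H) (AA : HomAlgebraStr K A)
    (coact : A →ₗ[K] H ⊗[K] A) : Prop :=
  (∀ a b : A,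
    coact (AA.mul a b)
      = TensorProduct.map (TensorProduct.lift HB.mul) (TensorProduct.lift AA.mul)
          (TensorProduct.tensorTensorTensorComm K H A H A (coact a ⊗ₜ[K] coact b))) ∧
  coact AA.one = HB.one ⊗ₜ[K] AA.one

/-- (A6). -/
def CondA6 (HB : HomBialgebraStr K H) (coact : A →ₗ[K] H ⊗[K] A)
    (σ : H →ₗ[K] H →ₗ[K] A) (m k : ℤ) : Prop :=
  ∀ h g : H,
    coactMulAux HB (m-1) (LinearMap.id : A →ₗ[K] A)
      (TensorProduct.map
        (coact ∘ₗ TensorProduct.lift σ ∘ₗ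
          TensorProduct.map (HB.str ^ (k+2)).toLinearMap (HB.str ^ (k+2)).toLinearMap)
        ((HB.str ^ (-1 : ℤ)).toLinearMap ∘ₗ TensorProduct.lift HB.mul)
        (TensorProduct.tensorTensorTensorComm K H H H H (HB.comul h ⊗ₜ[K] HB.comul g)))
    =
    TensorProduct.map (TensorProduct.lift HB.mul)
      (TensorProduct.lift σ ∘ₗ
        TensorProduct.map (HB.str ^ (k+1)).toLinearMap (HB.str ^ (k+1)).toLinearMap)
      (TensorProduct.tensorTensorTensorComm K H H H H (HB.comul h ⊗ₜ[K] HB.comul g))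

/-- (A7). -/
def CondA7 (HB : HomBialgebraStr K H) (AA : HomAlgebraStr K A) (AC : HomCoalgebraStr K A)
    (act : H →ₗ[K] A →ₗ[K] A) (coact : A →ₗ[K] H ⊗[K] A)
    (σ : H →ₗ[K] H →ₗ[K] A) (m k : ℤ) : Prop :=
  ∀ a b : A,
    AC.comul (AA.mul a b) =
      TensorProduct.map
        (TensorProduct.lift AA.mul
          ∘ₗ TensorProduct.map (LinearMap.id : A →ₗ[K] A)
              (TensorProduct.lift AA.mul
                ∘ₗ TensorProduct.map
                    (TensorProduct.lift act ∘ₗ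
                      TensorProduct.map (HB.str ^ (2*m)).toLinearMap (AA.str ^ (-2 : ℤ)).toLinearMap)
                    (TensorProduct.lift σ ∘ₗ
                      TensorProduct.map (HB.str ^ (k+m+1)).toLinearMap (HB.str ^ (k+m)).toLinearMap)
                ∘ₗ (TensorProduct.tensorTensorTensorComm K H H A H).toLinearMap)
          ∘ₗ (TensorProduct.assoc K A (H ⊗[K] H) (A ⊗[K] H)).toLinearMap)
        (AA.str.toLinearMap ∘ₗ TensorProduct.lift AA.mul)
        (TensorProduct.tensorTensorTensorComm K (A ⊗[K] (H ⊗[K] H)) A (A ⊗[K] H) A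
          ((TensorProduct.assoc K A (H ⊗[K] H) A).symm
              (TensorProduct.map (LinearMap.id : A →ₗ[K] A)
                (TensorProduct.map HB.comul (LinearMap.id : A →ₗ[K] A))
                (TensorProduct.map (LinearMap.id : A →ₗ[K] A) coact (AC.comul a)))
            ⊗ₜ[K]
            (TensorProduct.assoc K A H A).symm
              (TensorProduct.map (LinearMap.id : A →ₗ[K] A) coact (AC.comul b))))

/-- (A8). -/
def CondA8 (HB : HomBialgebraStr K H) (AA : HomAlgebraStr K A) (AC : HomCoalgebraStr K A)
    (act : H →ₗ[K] A →ₗ[K] A) (coact : A →ₗ[K] H ⊗[K] A)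
    (σ : H →ₗ[K] H →ₗ[K] A) (m k : ℤ) : Prop :=
  ∀ (h : H) (b : A),
    AC.comul (act ((HB.str ^ m) h) b) =
      TensorProduct.map
        (TensorProduct.lift AA.mul
          ∘ₗ TensorProduct.map
              (TensorProduct.lift act ∘ₗ
                TensorProduct.map (HB.str ^ m).toLinearMap (AA.str ^ (-1 : ℤ)).toLinearMap)
              (TensorProduct.lift σ ∘ₗ
                TensorProduct.map (HB.str ^ (k+1)).toLinearMap (HB.str ^ (k+m+1)).toLinearMap)
          ∘ₗ (TensorProduct.tensorTensorTensorComm K H H A H).toLinearMap)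
        (TensorProduct.lift act ∘ₗ
          TensorProduct.map (HB.str ^ m).toLinearMap AA.str.toLinearMap)
        (TensorProduct.tensorTensorTensorComm K (H ⊗[K] H) H (A ⊗[K] H) A
          (TensorProduct.map HB.comul (LinearMap.id : H →ₗ[K] H) (HB.comul h)
            ⊗ₜ[K]
            (TensorProduct.assoc K A H A).symm
              (TensorProduct.map (LinearMap.id : A →ₗ[K] A) coact (AC.comul b))))

/-- (A9). -/
def CondA9 (HB : HomBialgebraStr K H) (act : H →ₗ[K] A →ₗ[K] A)
    (coact : A →ₗ[K] H ⊗[K] A) (m : ℤ) : Prop :=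
  ∀ (h : H) (b : A),
    coactMulAux HB (m-1) (LinearMap.id : A →ₗ[K] A)
      (TensorProduct.map (coact ∘ₗ (act.flip b) ∘ₗ (HB.str ^ (m+1)).toLinearMap)
        (LinearMap.id : H →ₗ[K] H) (HB.comul h))
    =
    TensorProduct.map
      (TensorProduct.lift HB.mul ∘ₗ
        TensorProduct.map (LinearMap.id : H →ₗ[K] H) (HB.str ^ m).toLinearMap)
      (TensorProduct.lift act ∘ₗ
        TensorProduct.map (HB.str ^ m).toLinearMap (LinearMap.id : A →ₗ[K] A))
      (TensorProduct.tensorTensorTensorComm K H H H A (HB.comul h ⊗ₜ[K] coact b))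

/-- The Radford `[(m,k),m]`-biproduct structure on `A ⊗ H`. -/
structure IsRadfordBiproduct (HB : HomBialgebraStr K H) (AA : HomAlgebraStr K A)
    (AC : HomCoalgebraStr K A) (act : H →ₗ[K] A →ₗ[K] A) (coact : A →ₗ[K] H ⊗[K] A)
    (σ : H →ₗ[K] H →ₗ[K] A) (m k : ℤ) (B : HomBialgebraStr K (A ⊗[K] H)) : Prop where
  mul_def : ∀ (a : A) (h : H) (b : A) (g : H),
    B.mul (a ⊗ₜ[K] h) (b ⊗ₜ[K] g) = cpMulElem HB AA act σ m k a h b g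
  one_def : B.one = AA.one ⊗ₜ[K] HB.one
  comul_def : ∀ (a : A) (h : H), B.comul (a ⊗ₜ[K] h) = scComulElem HB AC coact m a h
  counit_def : ∀ (a : A) (h : H), B.counit (a ⊗ₜ[K] h) = AC.counit a * HB.counit h
  str_def : B.str = TensorProduct.congr AA.str HB.str

/-- `S_H` is a `σ`-antipode for `(H, α)`. -/
structure IsSigmaAntipode (HB : HomBialgebraStr K H) (AA : HomAlgebraStr K A)
    (σ : H →ₗ[K] H →ₗ[K] A) (S : H →ₗ[K] H) : Prop where
  antipode_str : ∀ h : H, S (HB.str h) = HB.str (S h)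
  right : ∀ h : H,
    TensorProduct.map (TensorProduct.lift σ) (TensorProduct.lift HB.mul)
        (TensorProduct.tensorTensorTensorComm K H H H H
          (TensorProduct.map HB.comul (HB.comul ∘ₗ S) (HB.comul h)))
      = HB.counit h • (AA.one ⊗ₜ[K] HB.one)
  left : ∀ h : H,
    TensorProduct.map (TensorProduct.lift σ) (TensorProduct.lift HB.mul)
        (TensorProduct.tensorTensorTensorComm K H H H H
          (TensorProduct.map (HB.comul ∘ₗ S) HB.comul (HB.comul h)))
      = HB.counit h • (AA.one ⊗ₜ[K] HB.one)

/-- `S_A` is a convolution inverse of `id_A`. -/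
def IsConvInvOfId (AA : HomAlgebraStr K A) (AC : HomCoalgebraStr K A)
    (SA : A →ₗ[K] A) : Prop :=
  (∀ a : A, TensorProduct.lift (AA.mul ∘ₗ SA) (AC.comul a) = AC.counit a • AA.one) ∧
  (∀ a : A, TensorProduct.lift (AA.mul.compl₂ SA) (AC.comul a) = AC.counit a • AA.one)

/-- `σ` and `σinv` are convolution inverses of each other. -/
def IsConvInvPair (HB : HomBialgebraStr K H) (AA : HomAlgebraStr K A)
    (σ σinv : H →ₗ[K] H →ₗ[K] A) : Prop :=
  (∀ h g : H,
    TensorProduct.lift AA.mul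
      (TensorProduct.map (TensorProduct.lift σ) (TensorProduct.lift σinv)
        (TensorProduct.tensorTensorTensorComm K H H H H (HB.comul h ⊗ₜ[K] HB.comul g)))
    = (HB.counit h * HB.counit g) • AA.one) ∧
  (∀ h g : H,
    TensorProduct.lift AA.mul
      (TensorProduct.map (TensorProduct.lift σinv) (TensorProduct.lift σ)
        (TensorProduct.tensorTensorTensorComm K H H H H (HB.comul h ⊗ₜ[K] HB.comul g)))
    = (HB.counit h * HB.counit g) • AA.one)

/-- The Radford antipode formula
`S(a ⊗ h) = (1_A ⊗ S_H(α^{m−1}(a₍₋₁₎)α⁻²(h)))·(S_A(a₍₀₎) ⊗ 1_H)`. -/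
def radfordAntipodeElem (HB : HomBialgebraStr K H) (AA : HomAlgebraStr K A)
    (coact : A →ₗ[K] H ⊗[K] A)
    (Bmul : (A ⊗[K] H) →ₗ[K] (A ⊗[K] H) →ₗ[K] (A ⊗[K] H))
    (SH : H →ₗ[K] H) (SA : A →ₗ[K] A) (m : ℤ) (a : A) (h : H) : A ⊗[K] H :=
  TensorProduct.lift Bmul
    (TensorProduct.map
      ((TensorProduct.mk K A H AA.one) ∘ₗ SH ∘ₗ (HB.mul.flip ((HB.str ^ (-2 : ℤ)) h)) ∘ₗ
        (HB.str ^ (m - 1)).toLinearMap)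
      (((TensorProduct.mk K A H).flip HB.one) ∘ₗ SA)
      (coact a))

/-- `φ^l(l ⊗ (a ⊗ h)) = (α(l₁₁)·β⁻¹(a)) σ(α^{k+2−m}(l₁₂), α^{k+1}(h₁)) ⊗ α^{1−m}(l₂)α(h₂)`. -/
def philElem (HB : HomBialgebraStr K H) (AA : HomAlgebraStr K A)
    (act : H →ₗ[K] A →ₗ[K] A) (σ : H →ₗ[K] H →ₗ[K] A) (m k : ℤ)
    (l : H) (a : A) (h : H) : A ⊗[K] H :=
  TensorProduct.map
    (TensorProduct.lift AA.mul ∘ₗ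
      TensorProduct.map ((act.flip ((AA.str ^ (-1 : ℤ)) a)) ∘ₗ HB.str.toLinearMap)
        (TensorProduct.lift σ ∘ₗ
          TensorProduct.map (HB.str ^ (k+2-m)).toLinearMap (HB.str ^ (k+1)).toLinearMap) ∘ₗ
      (TensorProduct.assoc K H H H).toLinearMap)
    (TensorProduct.lift HB.mul ∘ₗ
      TensorProduct.map (HB.str ^ (1-m)).toLinearMap HB.str.toLinearMap)
    (TensorProduct.map (TensorProduct.map HB.comul (LinearMap.id : H →ₗ[K] H))
      (LinearMap.id : H ⊗[K] H →ₗ[K] H ⊗[K] H)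
      (TensorProduct.tensorTensorTensorComm K H H H H (HB.comul l ⊗ₜ[K] HB.comul h)))

/-- `φ^r((a ⊗ h) ⊗ l) = a σ(α^{k+1}(h₁), α^{k+1−m}(l₁)) ⊗ α(h₂)α^{1−m}(l₂)`. -/
def phirElem (HB : HomBialgebraStr K H) (AA : HomAlgebraStr K A)
    (σ : H →ₗ[K] H →ₗ[K] A) (m k : ℤ) (a : A) (h : H) (l : H) : A ⊗[K] H :=
  TensorProduct.map
    ((AA.mul a) ∘ₗ TensorProduct.lift σ ∘ₗ
      TensorProduct.map (HB.str ^ (k+1)).toLinearMap (HB.str ^ (k+1-m)).toLinearMap)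
    (TensorProduct.lift HB.mul ∘ₗ
      TensorProduct.map HB.str.toLinearMap (HB.str ^ (1-m)).toLinearMap)
    (TensorProduct.tensorTensorTensorComm K H H H H (HB.comul h ⊗ₜ[K] HB.comul l))

/-- `(M, μ, φ)` is a left `(H, α, σ̄)`-Hom module. -/
def IsLeftSigmaHomModule (HB : HomBialgebraStr K H)
    (mulM : M →ₗ[K] M →ₗ[K] M) (strM : M →ₗ[K] M)
    (σbar : H →ₗ[K] H →ₗ[K] M) (φ : H →ₗ[K] M →ₗ[K] M) : Prop :=
  (∀ (g l : H) (x : M),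
    φ (HB.str g) (φ l x)
      = TensorProduct.lift mulM
          (TensorProduct.map (strM ∘ₗ TensorProduct.lift σbar)
            ((φ.flip x) ∘ₗ TensorProduct.lift HB.mul)
            (TensorProduct.tensorTensorTensorComm K H H H H (HB.comul g ⊗ₜ[K] HB.comul l))))
  ∧ (∀ x : M, φ HB.one x = strM x)

/-- `(M, μ, φ)` is a right `(H, α, σ̄)`-Hom module. -/
def IsRightSigmaHomModule (HB : HomBialgebraStr K H)
    (mulM : M →ₗ[K] M →ₗ[K] M) (strM : M →ₗ[K] M)
    (σbar : H →ₗ[K] H →ₗ[K] M) (φ : M →ₗ[K] H →ₗ[K] M) : Prop :=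
  (∀ (x : M) (l g : H),
    φ (φ x l) (HB.str g)
      = mulM (strM x)
          (TensorProduct.lift φ
            (TensorProduct.map (TensorProduct.lift σbar) (TensorProduct.lift HB.mul)
              (TensorProduct.tensorTensorTensorComm K H H H H (HB.comul l ⊗ₜ[K] HB.comul g)))))
  ∧ (∀ x : M, φ x HB.one = strM x)

/-- `(M, μ, φ⁺, φ⁻)` is a weak `(H, α)` Hom-bimodule. -/
def IsWeakHomBimodule (HB : HomBialgebraStr K H) (strM : M →ₗ[K] M)
    (φl : H →ₗ[K] M →ₗ[K] M) (φr : M →ₗ[K] H →ₗ[K] M) : Prop :=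
  (∀ x : M, φl HB.one x = strM x) ∧ (∀ x : M, φr x HB.one = strM x) ∧
  (∀ (h : H) (x : M) (g : H), φl (HB.str h) (φr x g) = φr (φl h x) (HB.str g))

/-- A weak `m`-Hom admissible mapping system `C ⇄ A ⇄ H`. -/
structure WeakAdmissibleSystem (HB : HomBialgebraStr K H)
    (CA : HomAlgebraStr K C) (CC : HomCoalgebraStr K C)
    (coact : C →ₗ[K] H ⊗[K] C) (m : ℤ) (AB : HomBialgebraStr K A)
    (j : C →ₗ[K] A) (p : A →ₗ[K] C) (i : H →ₗ[K] A) (π : A →ₗ[K] H) : Prop where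
  c_str_eq : CA.str = CC.str
  p_j : ∀ c : C, p (j c) = c
  pi_i : ∀ h : H, π (i h) = h
  pi_mul : ∀ a b : A, π (AB.mul a b) = HB.mul (π a) (π b)
  pi_one : π AB.one = HB.one
  pi_str : ∀ a : A, π (AB.str a) = HB.str (π a)
  pi_comul : ∀ a : A, TensorProduct.map π π (AB.comul a) = HB.comul (π a)
  pi_counit : ∀ a : A, HB.counit (π a) = AB.counit a
  i_one : i HB.one = AB.one
  i_str : ∀ h : H, i (HB.str h) = AB.str (i h)
  i_comul : ∀ h : H, TensorProduct.map i i (HB.comul h) = AB.comul (i h)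
  i_counit : ∀ h : H, AB.counit (i h) = HB.counit h
  p_str : ∀ a : A, p (AB.str a) = CC.str (p a)
  p_comul : ∀ a : A, TensorProduct.map p p (AB.comul a) = CC.comul (p a)
  p_counit : ∀ a : A, CC.counit (p a) = AB.counit a
  j_mul : ∀ c d : C, j (CA.mul c d) = AB.mul (j c) (j d)
  j_one : j CA.one = AB.one
  j_str : ∀ c : C, j (CC.str c) = AB.str (j c)
  p_left_act : ∀ (h : H) (a : A),
    p (AB.mul (i ((HB.str ^ (-m)) h)) a) = HB.counit h • CC.str (p a)
  p_right_act : ∀ (a : A) (h : H),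
    p (AB.mul a (i ((HB.str ^ (-m)) h))) = HB.counit h • CC.str (p a)
  sigma_mod : ∃ σbar : H →ₗ[K] H →ₗ[K] A,
    IsLeftSigmaHomModule HB AB.mul AB.str.toLinearMap σbar
        (AB.mul ∘ₗ i ∘ₗ (HB.str ^ (-m)).toLinearMap)
      ∧ IsRightSigmaHomModule HB AB.mul AB.str.toLinearMap σbar
        (AB.mul.compl₂ (i ∘ₗ (HB.str ^ (-m)).toLinearMap))
  sub_l : ∀ c : C, ∃ y : H ⊗[K] C,
    TensorProduct.map ((HB.str ^ (-m)).toLinearMap ∘ₗ π) (LinearMap.id : A →ₗ[K] A)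
        (AB.comul (j c))
      = TensorProduct.map (LinearMap.id : H →ₗ[K] H) j y
  sub_r : ∀ c : C, ∃ z : C ⊗[K] H,
    TensorProduct.map (LinearMap.id : A →ₗ[K] A) ((HB.str ^ (-m)).toLinearMap ∘ₗ π)
        (AB.comul (j c))
      = TensorProduct.map j (LinearMap.id : H →ₗ[K] H) z
  p_col : ∀ c : C,
    TensorProduct.map (LinearMap.id : H →ₗ[K] H) p
        (TensorProduct.map ((HB.str ^ (-m)).toLinearMap ∘ₗ π) (LinearMap.id : A →ₗ[K] A)
          (AB.comul (j c)))
      = coact c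
  p_cor : ∀ c : C,
    TensorProduct.map p (LinearMap.id : H →ₗ[K] H)
        (TensorProduct.map (LinearMap.id : A →ₗ[K] A) ((HB.str ^ (-m)).toLinearMap ∘ₗ π)
          (AB.comul (j c)))
      = CC.str.symm c ⊗ₜ[K] HB.one
  split : ∀ a : A,
    TensorProduct.lift AB.mul (TensorProduct.map (j ∘ₗ p) (i ∘ₗ π) (AB.comul a)) = a

/-- The map `f : C ♯ H → A`, `c ⊗ h ↦ γ⁻¹(j(c)i(h))`. -/
def admF (AB : HomBialgebraStr K A) (j : C →ₗ[K] A) (i : H →ₗ[K] A) :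
    C ⊗[K] H →ₗ[K] A :=
  AB.str.symm.toLinearMap ∘ₗ TensorProduct.lift ((AB.mul ∘ₗ j).compl₂ i)

/-- The map `g : A → C ♯ H`, `a ↦ β(p(a₁)) ⊗ α(π(a₂))`. -/
def admG (HB : HomBialgebraStr K H) (CC : HomCoalgebraStr K C)
    (AB : HomBialgebraStr K A) (p : A →ₗ[K] C) (π : A →ₗ[K] H) :
    A →ₗ[K] C ⊗[K] H :=
  TensorProduct.map (CC.str.toLinearMap ∘ₗ p) (HB.str.toLinearMap ∘ₗ π) ∘ₗ AB.comul

end Defs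

lemma auxZpowApply {K H : Type*} [Field K] [AddCommGroup H] [Module K H]
    (e : H ≃ₗ[K] H) (p q : ℤ) (x : H) : (e^(p+q)) x = (e^p) ((e^q) x) := by
  rw [zpow_add]; rfl

lemma auxInvApply {K H : Type*} [Field K] [AddCommGroup H] [Module K H]
    (e : H ≃ₗ[K] H) (x : H) : (e^(-1:ℤ)) x = e.symm x := by
  rw [zpow_neg_one]; rfl

lemma auxFixFun {K H W : Type*} [Field K] [AddCommGroup H] [Module K H]
    (e : H ≃ₗ[K] H) (f : H → W) (hf : ∀ y, f (e y) = f y) :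
    ∀ (n : ℤ) (y : H), f ((e^n) y) = f y := by
  have hsymm : ∀ y, f (e.symm y) = f y := fun y => by
    have := hf (e.symm y); rw [e.apply_symm_apply] at this; exact this.symm
  intro n
  induction n using Int.induction_on with
  | zero => intro y; rw [zpow_zero]; rfl
  | succ n ih =>
      intro y
      have h : (e^((n:ℤ)+1)) y = (e^(n:ℤ)) (e y) := by rw [zpow_add, zpow_one]; rfl
      rw [h, ih, hf]
  | pred n ih =>
      intro y
      have h : (e^(-(n:ℤ)-1)) y = (e^(-(n:ℤ))) (e.symm y) := by
        rw [sub_eq_add_neg, zpow_add, zpow_neg_one]; rfl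
      rw [h, ih, hsymm]

lemma auxFixPt {K H : Type*} [Field K] [AddCommGroup H] [Module K H]
    (e : H ≃ₗ[K] H) {x : H} (hx : e x = x) : ∀ n : ℤ, (e^n) x = x := by
  have hsx : e.symm x = x := e.symm_apply_eq.2 hx.symm
  intro n
  induction n using Int.induction_on with
  | zero => rw [zpow_zero]; rfl
  | succ n ih =>
      have h : (e^((n:ℤ)+1)) x = (e^(n:ℤ)) (e x) := by rw [zpow_add, zpow_one]; rfl
      rw [h, hx, ih]
  | pred n ih =>
      have h : (e^(-(n:ℤ)-1)) x = (e^(-(n:ℤ))) (e.symm x) := by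
        rw [sub_eq_add_neg, zpow_add, zpow_neg_one]; rfl
      rw [h, hsx, ih]
/-- The reduction step in the proof of Theorem 3.3: if `Δ` is multiplicative on the four
special kinds of pairs, then it is multiplicative on all pairs of simple tensors. -/
theorem comul_multiplicative_of_special_cases
    {K H A : Type*} [Field K] [AddCommGroup H] [Module K H] [AddCommGroup A] [Module K A]
    (HB : HomBialgebraStr K H) (AA : HomAlgebraStr K A) (AC : HomCoalgebraStr K A)
    (hstr : AA.str = AC.str)
    (act : H →ₗ[K] A →ₗ[K] A) (hact : IsWeakModuleAlgebra HB AA act)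
    (coact : A →ₗ[K] H ⊗[K] A) (hcc : IsComoduleCoalgebra HB AC coact)
    (σ : H →ₗ[K] H →ₗ[K] A) (m k : ℤ)
    (M : HomAlgebraStr K (A ⊗[K] H))
    (hMmul : ∀ (a : A) (h : H) (b : A) (g : H),
      M.mul (a ⊗ₜ[K] h) (b ⊗ₜ[K] g) = cpMulElem HB AA act σ m k a h b g)
    (hMone : M.one = AA.one ⊗ₜ[K] HB.one)
    (hMstr : M.str = TensorProduct.congr AA.str HB.str)
    (hcoc : IsTwistedCocycle HB AA AC coact σ m k)
    (D : HomCoalgebraStr K (A ⊗[K] H))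
    (hDcomul : ∀ (a : A) (h : H), D.comul (a ⊗ₜ[K] h) = scComulElem HB AC coact m a h)
    (hDcounit : ∀ (a : A) (h : H), D.counit (a ⊗ₜ[K] h) = AC.counit a * HB.counit h)
    (hDstr : D.str = TensorProduct.congr AC.str HB.str)
    (h1 : ∀ a b : A,
      D.comul (M.mul (a ⊗ₜ[K] HB.one) (b ⊗ₜ[K] HB.one))
        = tensorSquareMul M.mul (D.comul (a ⊗ₜ[K] HB.one)) (D.comul (b ⊗ₜ[K] HB.one)))
    (h2 : ∀ (a : A) (g : H),
      D.comul (M.mul (a ⊗ₜ[K] HB.one) (AA.one ⊗ₜ[K] g))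
        = tensorSquareMul M.mul (D.comul (a ⊗ₜ[K] HB.one)) (D.comul (AA.one ⊗ₜ[K] g)))
    (h3 : ∀ (h : H) (b : A),
      D.comul (M.mul (AA.one ⊗ₜ[K] h) (b ⊗ₜ[K] HB.one))
        = tensorSquareMul M.mul (D.comul (AA.one ⊗ₜ[K] h)) (D.comul (b ⊗ₜ[K] HB.one)))
    (h4 : ∀ h g : H,
      D.comul (M.mul (AA.one ⊗ₜ[K] h) (AA.one ⊗ₜ[K] g))
        = tensorSquareMul M.mul (D.comul (AA.one ⊗ₜ[K] h)) (D.comul (AA.one ⊗ₜ[K] g))) :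
    ∀ (a : A) (h : H) (b : A) (g : H),
      D.comul (M.mul (a ⊗ₜ[K] h) (b ⊗ₜ[K] g))
        = tensorSquareMul M.mul (D.comul (a ⊗ₜ[K] h)) (D.comul (b ⊗ₜ[K] g)) := by
  have hα1 : ∀ n : ℤ, (HB.str ^ n) HB.one = HB.one := auxFixPt HB.str HB.str_one
  have hβ1 : ∀ n : ℤ, (AA.str ^ n) AA.one = AA.one := auxFixPt AA.str AA.str_one
  have hε : ∀ (n : ℤ) (y : H), HB.counit ((HB.str ^ n) y) = HB.counit y :=
    auxFixFun HB.str HB.counit HB.counit_str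
  have hcan : ∀ (p q : ℤ) (x : A), p + q = 0 → (AA.str ^ p) ((AA.str ^ q) x) = x := by
    intro p q x hpq
    rw [← auxZpowApply, hpq, zpow_zero]; rfl
  have hb2 : ∀ x : A, AA.str (AA.str x) = (AA.str ^ (2:ℤ)) x := by
    intro x
    rw [show (2:ℤ) = 1 + 1 from rfl, auxZpowApply, zpow_one]
  have hββ : ∀ x : A, AA.str (AA.str ((AA.str ^ (-2:ℤ)) x)) = x := by
    intro x; rw [hb2, hcan] ; norm_num
  have hβ2cancel : ∀ x : A, (AA.str ^ (-2:ℤ)) (AA.str (AA.str x)) = x := by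
    intro x; rw [hb2, hcan]; norm_num
  -- computation of the crossed product multiplication when `h = 1`
  have comp1 : ∀ (a b : A) (g : H),
      cpMulElem HB AA act σ m k a HB.one b g
      = TensorProduct.map
          ((AA.mul a) ∘ₗ (AA.mul ((act HB.one) ((AA.str ^ (-2:ℤ)) b))) ∘ₗ (σ HB.one)
            ∘ₗ (HB.str ^ k).toLinearMap)
          (HB.str.toLinearMap ∘ₗ HB.str.toLinearMap)
          (HB.comul g) := by
    intro a b g
    unfold cpMulElem
    rw [HB.comul_one]
    generalize HB.comul g = x
    induction x using TensorProduct.induction_on with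
    | zero => simp
    | add u v hu hv => simp only [tmul_add, map_add, hu, hv]
    | tmul g1 g2 =>
        simp only [TensorProduct.tensorTensorTensorComm_tmul, TensorProduct.map_tmul,
          LinearMap.comp_apply, LinearEquiv.coe_coe, TensorProduct.assoc_tmul,
          TensorProduct.lift.tmul, LinearMap.flip_apply, LinearMap.id_coe, id_eq,
          LinearMap.coe_comp, Function.comp_apply, hα1, HB.comul_one]
        rw [HB.one_mul]
  -- the counit-cancellation map
  have hΦt : ∀ (x : A) (y : H),
      ((TensorProduct.rid K A).toLinearMap ∘ₗ TensorProduct.map LinearMap.id HB.counit)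
        (x ⊗ₜ[K] y) = HB.counit y • x := by
    intro x y
    simp [TensorProduct.rid_tmul]
  have hΦnat : ∀ (L : H →ₗ[K] A) (x : H ⊗[K] H),
      ((TensorProduct.rid K A).toLinearMap ∘ₗ TensorProduct.map LinearMap.id HB.counit)
        (TensorProduct.map L (HB.str.toLinearMap ∘ₗ HB.str.toLinearMap) x)
      = L ((TensorProduct.rid K H) (TensorProduct.map LinearMap.id HB.counit x)) := by
    intro L x
    induction x using TensorProduct.induction_on with
    | zero => simp
    | add u v hu hv => simp only [map_add, hu, hv]
    | tmul g1 g2 =>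
        simp only [TensorProduct.map_tmul, LinearMap.comp_apply, LinearEquiv.coe_coe,
          LinearMap.id_coe, id_eq, TensorProduct.rid_tmul, map_smul, HB.counit_str]
  -- consequence of the left unit law of M
  have honemul : ∀ (b : A) (g : H),
      TensorProduct.map
          ((AA.mul AA.one) ∘ₗ (AA.mul ((act HB.one) ((AA.str ^ (-2:ℤ)) b))) ∘ₗ (σ HB.one)
            ∘ₗ (HB.str ^ k).toLinearMap)
          (HB.str.toLinearMap ∘ₗ HB.str.toLinearMap)
          (HB.comul g)
        = AA.str b ⊗ₜ[K] HB.str g := by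
    intro b g
    rw [← comp1, ← hMmul, ← hMone, M.one_mul, hMstr]
    simp [TensorProduct.congr_tmul]
  -- σ(1, y) = ε(y) • 1
  have hσ1 : ∀ y : H, σ HB.one y = HB.counit y • AA.one := by
    have key : ∀ g : H,
        AA.str (AA.str (σ HB.one ((HB.str ^ k) (HB.str.symm g)))) = HB.counit g • AA.one := by
      intro g
      have h := congrArg
        ((TensorProduct.rid K A).toLinearMap ∘ₗ TensorProduct.map LinearMap.id HB.counit)
        (honemul AA.one g)
      rw [hΦnat, HB.counit_comul_right, hΦt, AA.str_one, HB.counit_str] at h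
      simp only [LinearMap.comp_apply, LinearEquiv.coe_coe] at h
      rw [hβ1, hact.act_one, HB.counit_one, one_smul, AA.one_mul, AA.one_mul] at h
      exact h
    intro y
    have hg := key (HB.str ((HB.str ^ k).symm y))
    rw [HB.str.symm_apply_apply, (HB.str ^ k).apply_symm_apply, HB.counit_str] at hg
    have hεy : HB.counit ((HB.str ^ k).symm y) = HB.counit y := by
      conv_rhs => rw [← (HB.str ^ k).apply_symm_apply y, hε]
    rw [hεy] at hg
    have h2' : AA.str (AA.str (HB.counit y • AA.one)) = HB.counit y • AA.one := by
      rw [map_smul, map_smul, AA.str_one, AA.str_one]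
    exact AA.str.injective (AA.str.injective (hg.trans h2'.symm))
  -- 1 · b = β(b)
  have hact1 : ∀ b : A, act HB.one b = AA.str b := by
    intro b0
    have h := honemul (AA.str (AA.str b0)) HB.one
    rw [HB.comul_one, TensorProduct.map_tmul] at h
    simp only [LinearMap.comp_apply, LinearEquiv.coe_coe] at h
    rw [hα1, hβ2cancel, hσ1, HB.counit_one, one_smul, AA.mul_one, AA.one_mul,
      HB.str_one, HB.str_one] at h
    have h2 := congrArg
      ((TensorProduct.rid K A).toLinearMap ∘ₗ TensorProduct.map LinearMap.id HB.counit) h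
    rw [hΦt, hΦt, HB.counit_one, one_smul, one_smul] at h2
    exact AA.str.injective (AA.str.injective h2)
  -- the two factorization formulas
  have hF1 : ∀ (b : A) (g : H),
      M.mul (b ⊗ₜ[K] HB.one) (AA.one ⊗ₜ[K] g) = AA.str b ⊗ₜ[K] HB.str g := by
    intro b g
    rw [hMmul, comp1]
    have hLb : (AA.mul b) ∘ₗ (AA.mul ((act HB.one) ((AA.str ^ (-2:ℤ)) AA.one))) ∘ₗ (σ HB.one)
          ∘ₗ (HB.str ^ k).toLinearMap
        = (LinearMap.toSpanSingleton K A (AA.str b)) ∘ₗ HB.counit := by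
      ext y
      simp only [LinearMap.comp_apply, LinearEquiv.coe_coe, LinearMap.toSpanSingleton_apply]
      rw [hβ1, hact1, AA.str_one, hσ1, hε, AA.one_mul, map_smul, AA.str_one,
        map_smul, AA.mul_one]
    rw [hLb]
    have hmap1 : ∀ x : H ⊗[K] H,
        TensorProduct.map ((LinearMap.toSpanSingleton K A (AA.str b)) ∘ₗ HB.counit)
          (HB.str.toLinearMap ∘ₗ HB.str.toLinearMap) x
        = AA.str b ⊗ₜ[K]
            (HB.str (HB.str ((TensorProduct.lid K H)
              (TensorProduct.map HB.counit LinearMap.id x)))) := by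
      intro x
      induction x using TensorProduct.induction_on with
      | zero => simp
      | add u v hu hv => simp only [map_add, hu, hv, tmul_add]
      | tmul g1 g2 =>
          simp only [TensorProduct.map_tmul, LinearMap.comp_apply, LinearEquiv.coe_coe,
            LinearMap.id_coe, id_eq, LinearMap.toSpanSingleton_apply, TensorProduct.lid_tmul,
            map_smul, TensorProduct.smul_tmul, TensorProduct.tmul_smul]
    rw [hmap1, HB.counit_comul_left, HB.str.apply_symm_apply]
  have hF2 : ∀ (a b : A),
      M.mul (a ⊗ₜ[K] HB.one) (b ⊗ₜ[K] HB.one) = AA.mul a b ⊗ₜ[K] HB.one := by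
    intro a b
    rw [hMmul, comp1, HB.comul_one, TensorProduct.map_tmul]
    simp only [LinearMap.comp_apply, LinearEquiv.coe_coe]
    rw [hα1, hσ1, HB.counit_one, one_smul, AA.mul_one, hact1, hββ, HB.str_one, HB.str_one]
  -- structure map on simple tensors
  have hMstr' : ∀ (x : A) (y : H), M.str (x ⊗ₜ[K] y) = AA.str x ⊗ₜ[K] HB.str y := by
    intro x y; rw [hMstr]; rfl
  have DstrM : ∀ u : A ⊗[K] H,
      D.comul (M.str u)
        = TensorProduct.map M.str.toLinearMap M.str.toLinearMap (D.comul u) := by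
    have hMD : M.str = D.str := by rw [hMstr, hDstr, hstr]
    intro u; rw [hMD]; exact D.comul_str u
  have hts : ∀ (p q r s : A ⊗[K] H),
      tensorSquareMul M.mul (p ⊗ₜ[K] q) (r ⊗ₜ[K] s) = M.mul p r ⊗ₜ[K] M.mul q s := by
    intro p q r s
    simp [tensorSquareMul]
  have htsAssoc : ∀ X Y Z : (A ⊗[K] H) ⊗[K] (A ⊗[K] H),
      tensorSquareMul M.mul (TensorProduct.map M.str.toLinearMap M.str.toLinearMap X)
          (tensorSquareMul M.mul Y Z)
        = tensorSquareMul M.mul (tensorSquareMul M.mul X Y)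
            (TensorProduct.map M.str.toLinearMap M.str.toLinearMap Z) := by
    intro X Y Z
    induction X using TensorProduct.induction_on with
    | zero => simp
    | add u v hu hv => simp only [map_add, LinearMap.add_apply, hu, hv]
    | tmul x1 x2 =>
      induction Y using TensorProduct.induction_on with
      | zero => simp
      | add u v hu hv => simp only [map_add, LinearMap.add_apply, hu, hv]
      | tmul y1 y2 =>
        induction Z using TensorProduct.induction_on with
        | zero => simp
        | add u v hu hv => simp only [map_add, LinearMap.add_apply, hu, hv]
        | tmul z1 z2 =>
            simp only [TensorProduct.map_tmul, LinearEquiv.coe_coe, hts, M.hom_assoc]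
  -- the two regrouping principles
  have chainA : ∀ (x z w x1 w1 : A ⊗[K] H),
      M.str x = x1 → M.str w = w1 →
      D.comul (M.mul x z) = tensorSquareMul M.mul (D.comul x) (D.comul z) →
      D.comul (M.mul z w) = tensorSquareMul M.mul (D.comul z) (D.comul w) →
      D.comul (M.mul (M.mul x z) w1)
        = tensorSquareMul M.mul (D.comul (M.mul x z)) (D.comul w1) →
      D.comul (M.mul x1 (M.mul z w))
        = tensorSquareMul M.mul (D.comul x1) (D.comul (M.mul z w)) := by
    intro x z w x1 w1 hx hw hxz hzw hbig
    subst hx; subst hw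
    calc D.comul (M.mul (M.str x) (M.mul z w))
        = D.comul (M.mul (M.mul x z) (M.str w)) := by rw [M.hom_assoc]
      _ = tensorSquareMul M.mul (D.comul (M.mul x z)) (D.comul (M.str w)) := hbig
      _ = tensorSquareMul M.mul
            (tensorSquareMul M.mul (D.comul x) (D.comul z))
            (TensorProduct.map M.str.toLinearMap M.str.toLinearMap (D.comul w)) := by
          rw [hxz, DstrM]
      _ = tensorSquareMul M.mul
            (TensorProduct.map M.str.toLinearMap M.str.toLinearMap (D.comul x))
            (tensorSquareMul M.mul (D.comul z) (D.comul w)) := (htsAssoc _ _ _).symm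
      _ = tensorSquareMul M.mul (D.comul (M.str x)) (D.comul (M.mul z w)) := by
          rw [← DstrM, ← hzw]
  have chainB : ∀ (x z w x1 w1 : A ⊗[K] H),
      M.str x = x1 → M.str w = w1 →
      D.comul (M.mul x z) = tensorSquareMul M.mul (D.comul x) (D.comul z) →
      D.comul (M.mul z w) = tensorSquareMul M.mul (D.comul z) (D.comul w) →
      D.comul (M.mul x1 (M.mul z w))
        = tensorSquareMul M.mul (D.comul x1) (D.comul (M.mul z w)) →
      D.comul (M.mul (M.mul x z) w1)
        = tensorSquareMul M.mul (D.comul (M.mul x z)) (D.comul w1) := by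
    intro x z w x1 w1 hx hw hxz hzw hbig
    subst hx; subst hw
    calc D.comul (M.mul (M.mul x z) (M.str w))
        = D.comul (M.mul (M.str x) (M.mul z w)) := by rw [M.hom_assoc]
      _ = tensorSquareMul M.mul (D.comul (M.str x)) (D.comul (M.mul z w)) := hbig
      _ = tensorSquareMul M.mul
            (TensorProduct.map M.str.toLinearMap M.str.toLinearMap (D.comul x))
            (tensorSquareMul M.mul (D.comul z) (D.comul w)) := by
          rw [DstrM, hzw]
      _ = tensorSquareMul M.mul
            (tensorSquareMul M.mul (D.comul x) (D.comul z))
            (TensorProduct.map M.str.toLinearMap M.str.toLinearMap (D.comul w)) :=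
          htsAssoc _ _ _
      _ = tensorSquareMul M.mul (D.comul (M.mul x z)) (D.comul (M.str w)) := by
          rw [← hxz, ← DstrM]
  -- P3 : multiplicativity on (a ⊗ 1, c ⊗ l)
  have P3 : ∀ (a c : A) (l : H),
      D.comul (M.mul (a ⊗ₜ[K] HB.one) (c ⊗ₜ[K] l))
        = tensorSquareMul M.mul (D.comul (a ⊗ₜ[K] HB.one)) (D.comul (c ⊗ₜ[K] l)) := by
    intro a c l
    have hx : M.str ((AA.str.symm a) ⊗ₜ[K] HB.one) = a ⊗ₜ[K] HB.one := by
      rw [hMstr', AA.str.apply_symm_apply, HB.str_one]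
    have hw : M.str (AA.one ⊗ₜ[K] (HB.str.symm l)) = AA.one ⊗ₜ[K] l := by
      rw [hMstr', AA.str_one, HB.str.apply_symm_apply]
    have hfact : M.mul ((AA.str.symm c) ⊗ₜ[K] HB.one) (AA.one ⊗ₜ[K] (HB.str.symm l))
        = c ⊗ₜ[K] l := by
      rw [hF1, AA.str.apply_symm_apply, HB.str.apply_symm_apply]
    have hbig : D.comul (M.mul
          (M.mul ((AA.str.symm a) ⊗ₜ[K] HB.one) ((AA.str.symm c) ⊗ₜ[K] HB.one))
          (AA.one ⊗ₜ[K] l))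
        = tensorSquareMul M.mul
            (D.comul (M.mul ((AA.str.symm a) ⊗ₜ[K] HB.one) ((AA.str.symm c) ⊗ₜ[K] HB.one)))
            (D.comul (AA.one ⊗ₜ[K] l)) := by
      rw [hF2]; exact h2 _ _
    have := chainA ((AA.str.symm a) ⊗ₜ[K] HB.one) ((AA.str.symm c) ⊗ₜ[K] HB.one)
      (AA.one ⊗ₜ[K] (HB.str.symm l)) (a ⊗ₜ[K] HB.one) (AA.one ⊗ₜ[K] l)
      hx hw (h1 _ _) (h2 _ _) hbig
    rwa [hfact] at this
  have P3e : ∀ (a : A) (Y : A ⊗[K] H),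
      D.comul (M.mul (a ⊗ₜ[K] HB.one) Y)
        = tensorSquareMul M.mul (D.comul (a ⊗ₜ[K] HB.one)) (D.comul Y) := by
    intro a Y
    induction Y using TensorProduct.induction_on with
    | zero => simp
    | tmul c l => exact P3 a c l
    | add u v hu hv => simp only [map_add, hu, hv]
  -- Q2 : multiplicativity on (c ⊗ l, 1 ⊗ g)
  have Q2 : ∀ (c : A) (l g : H),
      D.comul (M.mul (c ⊗ₜ[K] l) (AA.one ⊗ₜ[K] g))
        = tensorSquareMul M.mul (D.comul (c ⊗ₜ[K] l)) (D.comul (AA.one ⊗ₜ[K] g)) := by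
    intro c l g
    have hx : M.str ((AA.str.symm c) ⊗ₜ[K] HB.one) = c ⊗ₜ[K] HB.one := by
      rw [hMstr', AA.str.apply_symm_apply, HB.str_one]
    have hw : M.str (AA.one ⊗ₜ[K] (HB.str.symm g)) = AA.one ⊗ₜ[K] g := by
      rw [hMstr', AA.str_one, HB.str.apply_symm_apply]
    have hfact : M.mul ((AA.str.symm c) ⊗ₜ[K] HB.one) (AA.one ⊗ₜ[K] (HB.str.symm l))
        = c ⊗ₜ[K] l := by
      rw [hF1, AA.str.apply_symm_apply, HB.str.apply_symm_apply]
    have := chainB ((AA.str.symm c) ⊗ₜ[K] HB.one) (AA.one ⊗ₜ[K] (HB.str.symm l))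
      (AA.one ⊗ₜ[K] (HB.str.symm g)) (c ⊗ₜ[K] HB.one) (AA.one ⊗ₜ[K] g)
      hx hw (h2 _ _) (h4 _ _) (P3e c _)
    rwa [hfact] at this
  have Q2e : ∀ (X : A ⊗[K] H) (g : H),
      D.comul (M.mul X (AA.one ⊗ₜ[K] g))
        = tensorSquareMul M.mul (D.comul X) (D.comul (AA.one ⊗ₜ[K] g)) := by
    intro X g
    induction X using TensorProduct.induction_on with
    | zero => simp
    | tmul c l => exact Q2 c l g
    | add u v hu hv => simp only [map_add, LinearMap.add_apply, hu, hv]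
  -- Q1 : multiplicativity on (c ⊗ l, b ⊗ 1)
  have Q1 : ∀ (c : A) (l : H) (b : A),
      D.comul (M.mul (c ⊗ₜ[K] l) (b ⊗ₜ[K] HB.one))
        = tensorSquareMul M.mul (D.comul (c ⊗ₜ[K] l)) (D.comul (b ⊗ₜ[K] HB.one)) := by
    intro c l b
    have hx : M.str ((AA.str.symm c) ⊗ₜ[K] HB.one) = c ⊗ₜ[K] HB.one := by
      rw [hMstr', AA.str.apply_symm_apply, HB.str_one]
    have hw : M.str ((AA.str.symm b) ⊗ₜ[K] HB.one) = b ⊗ₜ[K] HB.one := by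
      rw [hMstr', AA.str.apply_symm_apply, HB.str_one]
    have hfact : M.mul ((AA.str.symm c) ⊗ₜ[K] HB.one) (AA.one ⊗ₜ[K] (HB.str.symm l))
        = c ⊗ₜ[K] l := by
      rw [hF1, AA.str.apply_symm_apply, HB.str.apply_symm_apply]
    have := chainB ((AA.str.symm c) ⊗ₜ[K] HB.one) (AA.one ⊗ₜ[K] (HB.str.symm l))
      ((AA.str.symm b) ⊗ₜ[K] HB.one) (c ⊗ₜ[K] HB.one) (b ⊗ₜ[K] HB.one)
      hx hw (h2 _ _) (h3 _ _) (P3e c _)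
    rwa [hfact] at this
  -- the general case
  intro a h b g
  have hx : M.str ((AA.str.symm a) ⊗ₜ[K] (HB.str.symm h)) = a ⊗ₜ[K] h := by
    rw [hMstr', AA.str.apply_symm_apply, HB.str.apply_symm_apply]
  have hw : M.str (AA.one ⊗ₜ[K] (HB.str.symm g)) = AA.one ⊗ₜ[K] g := by
    rw [hMstr', AA.str_one, HB.str.apply_symm_apply]
  have hfact : M.mul ((AA.str.symm b) ⊗ₜ[K] HB.one) (AA.one ⊗ₜ[K] (HB.str.symm g))
      = b ⊗ₜ[K] g := by
    rw [hF1, AA.str.apply_symm_apply, HB.str.apply_symm_apply]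
  have := chainA ((AA.str.symm a) ⊗ₜ[K] (HB.str.symm h)) ((AA.str.symm b) ⊗ₜ[K] HB.one)
    (AA.one ⊗ₜ[K] (HB.str.symm g)) (a ⊗ₜ[K] h) (AA.one ⊗ₜ[K] g)
    hx hw (Q1 _ _ _) (h2 _ _) (Q2e _ g)
  rwa [hfact] at this
end
end

section
/- Let (A ♯_σ^× H, β ⊗ α) be a Radford [(m,k),m]-biproduct monoidal Hom-bialgebra. Suppose (H, α) is a σ-monoidal Hom-Hopf algebra with σ-antipode S_H, and S_A: A → A is a convolution inverse of id_A (i.e. S_A(a₁)a₂ = ε(a)1_A = a₁S_A(a₂)) with β∘S_A = S_A∘β. Then (A ♯_σ^× H, β ⊗ α) is a monoidal Hom-Hopf algebra with antipode S(a ⊗ h) = (1_A ⊗ S_H(α^{m−1}(a₍₋₁₎)α⁻²(h)))·(S_A(a₍₀₎) ⊗ 1_H). -/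
open TensorProduct

noncomputable section

/-! ### Auxiliary infrastructure for the proof -/

section AuxZpow

variable {K M N : Type*} [Field K] [AddCommGroup M] [Module K M] [AddCommGroup N] [Module K N]

theorem aux_zpow_app (e : M ≃ₗ[K] M) (p q : ℤ) (x : M) :
    (e ^ p) ((e ^ q) x) = (e ^ (p + q)) x := by
  rw [zpow_add]; rfl

theorem aux_zpow_commute {f : M →ₗ[K] N} {eM : M ≃ₗ[K] M} {eN : N ≃ₗ[K] N}
    (h : ∀ x, f (eM x) = eN (f x)) (n : ℤ) (x : M) :
    f ((eM ^ n) x) = (eN ^ n) (f x) := by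
  have hs : ∀ x, f (eM.symm x) = eN.symm (f x) := by
    intro x
    apply eN.injective
    rw [eN.apply_symm_apply, ← h, eM.apply_symm_apply]
  induction n using Int.induction_on generalizing x with
  | zero => simp
  | succ i ih =>
      rw [show (i:ℤ)+1 = 1+i by ring, ← aux_zpow_app eM 1 i, ← aux_zpow_app eN 1 i,
        zpow_one, zpow_one, h, ih]
  | pred i ih =>
      rw [show -(i:ℤ)-1 = (-1)+(-i) by ring, ← aux_zpow_app eM (-1) (-i),
        ← aux_zpow_app eN (-1) (-i), zpow_neg_one, zpow_neg_one]
      show f (eM.symm _) = eN.symm _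
      rw [hs, ih]

theorem aux_zpow_fix (e : M ≃ₗ[K] M) (x : M) (h : e x = x) (n : ℤ) : (e ^ n) x = x := by
  have hs : e.symm x = x := by conv_lhs => rw [← h, e.symm_apply_apply]
  induction n using Int.induction_on with
  | zero => rfl
  | succ i ih => rw [show (i:ℤ)+1 = 1+i by ring, ← aux_zpow_app e 1 i, ih, zpow_one, h]
  | pred i ih =>
      rw [show -(i:ℤ)-1 = (-1)+(-i) by ring, ← aux_zpow_app e (-1) (-i), ih, zpow_neg_one]
      exact hs

theorem aux_zpow_scalar {f : M →ₗ[K] K} {e : M ≃ₗ[K] M}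
    (h : ∀ x, f (e x) = f x) (n : ℤ) (x : M) : f ((e ^ n) x) = f x := by
  have := aux_zpow_commute (f := f) (eM := e) (eN := LinearEquiv.refl K K)
    (by simpa using h) n x
  rw [show (LinearEquiv.refl K K) = 1 from rfl, one_zpow] at this
  simpa using this

theorem aux_zpow_zero {K M : Type*} [Field K] [AddCommGroup M] [Module K M]
    (e : M ≃ₗ[K] M) (x : M) : (e ^ (0:ℤ)) x = x := by
  rw [zpow_zero]; rfl

theorem aux_zpow_two {K M : Type*} [Field K] [AddCommGroup M] [Module K M]
    (e : M ≃ₗ[K] M) (x : M) : (e ^ (2:ℤ)) x = e (e x) := by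
  rw [show (2:ℤ) = 1 + 1 from rfl, ← aux_zpow_app, zpow_one]

theorem aux_symm_zpow (e : M ≃ₗ[K] M) (x : M) : e.symm x = (e ^ (-1:ℤ)) x := by
  rw [zpow_neg_one]; rfl

theorem aux_one_zpow (e : M ≃ₗ[K] M) (x : M) : e x = (e ^ (1:ℤ)) x := by
  rw [zpow_one]

end AuxZpow

section AuxTensor

variable {K : Type*} [Field K]
variable {M N P Q M' N' P' Q' : Type*}
variable [AddCommGroup M] [Module K M] [AddCommGroup N] [Module K N]
variable [AddCommGroup P] [Module K P] [AddCommGroup Q] [Module K Q]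
variable [AddCommGroup M'] [Module K M'] [AddCommGroup N'] [Module K N']
variable [AddCommGroup P'] [Module K P'] [AddCommGroup Q'] [Module K Q']

open TensorProduct

theorem aux_map_map (f : M →ₗ[K] P) (g : N →ₗ[K] Q) (f' : M' →ₗ[K] M) (g' : N' →ₗ[K] N)
    (x : M' ⊗[K] N') :
    TensorProduct.map f g (TensorProduct.map f' g' x) = TensorProduct.map (f ∘ₗ f') (g ∘ₗ g') x := by
  rw [TensorProduct.map_comp]; rfl

theorem aux_tttc_nat (f₁ : M →ₗ[K] M') (f₂ : N →ₗ[K] N') (f₃ : P →ₗ[K] P') (f₄ : Q →ₗ[K] Q')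
    (x : (M ⊗[K] N) ⊗[K] (P ⊗[K] Q)) :
    TensorProduct.tensorTensorTensorComm K M' N' P' Q'
        (TensorProduct.map (TensorProduct.map f₁ f₂) (TensorProduct.map f₃ f₄) x)
      = TensorProduct.map (TensorProduct.map f₁ f₃) (TensorProduct.map f₂ f₄)
          (TensorProduct.tensorTensorTensorComm K M N P Q x) := by
  induction x using TensorProduct.induction_on with
  | zero => simp
  | add x y hx hy => simp [map_add, hx, hy]
  | tmul u v =>
      induction u using TensorProduct.induction_on with
      | zero => simp
      | add u₁ u₂ h1 h2 => simp only [add_tmul, map_add, h1, h2]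
      | tmul m n =>
          induction v using TensorProduct.induction_on with
          | zero => simp
          | add v₁ v₂ h1 h2 => simp only [tmul_add, map_add, h1, h2]
          | tmul p q => simp [tensorTensorTensorComm_tmul]

theorem aux_rid_nat (f : M →ₗ[K] N) (c : M' →ₗ[K] K) (u : M ⊗[K] M') :
    TensorProduct.rid K N (TensorProduct.map f c u)
      = f (TensorProduct.rid K M (TensorProduct.map LinearMap.id c u)) := by
  induction u using TensorProduct.induction_on with
  | zero => simp
  | add x y hx hy => simp [map_add, hx, hy]
  | tmul x y => simp

theorem aux_lid_nat (f : M' →ₗ[K] N) (c : M →ₗ[K] K) (u : M ⊗[K] M') :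
    TensorProduct.lid K N (TensorProduct.map c f u)
      = f (TensorProduct.lid K M' (TensorProduct.map c LinearMap.id u)) := by
  induction u using TensorProduct.induction_on with
  | zero => simp
  | add x y hx hy => simp [map_add, hx, hy]
  | tmul x y => simp

theorem aux_smulRight_collapse (c : M →ₗ[K] K) (x : N) (f : M' →ₗ[K] N') (u : M ⊗[K] M') :
    TensorProduct.map (c.smulRight x) f u
      = x ⊗ₜ[K] f (TensorProduct.lid K M' (TensorProduct.map c LinearMap.id u)) := by
  induction u using TensorProduct.induction_on with
  | zero => simp
  | add y z hy hz => simp [map_add, hy, hz, tmul_add]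
  | tmul y z => simp [smul_tmul', tmul_smul]

theorem aux_double_counit (cA : M →ₗ[K] K) (cB : N →ₗ[K] K) (x : P) (u : M ⊗[K] N) :
    TensorProduct.lid K P (TensorProduct.map cA (cB.smulRight x) u)
      = cA (TensorProduct.rid K M (TensorProduct.map LinearMap.id cB u)) • x := by
  induction u using TensorProduct.induction_on with
  | zero => simp
  | add y z hy hz => simp [map_add, hy, hz, add_smul]
  | tmul y z => simp [smul_smul, mul_comm]

theorem aux_congr_zpow (e : M ≃ₗ[K] M) (f : N ≃ₗ[K] N) (n : ℤ) (x : M ⊗[K] N) :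
    ((TensorProduct.congr e f) ^ n) x
      = TensorProduct.map ((e ^ n).toLinearMap) ((f ^ n).toLinearMap) x := by
  have hcongr : ∀ (e' : M ≃ₗ[K] M) (f' : N ≃ₗ[K] N) (y : M ⊗[K] N),
      TensorProduct.congr e' f' y = TensorProduct.map e'.toLinearMap f'.toLinearMap y := by
    intro e' f' y
    induction y using TensorProduct.induction_on with
    | zero => simp
    | add a b ha hb => simp [map_add, ha, hb]
    | tmul a b => simp
  have hcs : ∀ y : M ⊗[K] N, (TensorProduct.congr e f).symm y
      = TensorProduct.map (e.symm.toLinearMap) (f.symm.toLinearMap) y := by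
    intro y
    apply (TensorProduct.congr e f).injective
    rw [LinearEquiv.apply_symm_apply, hcongr, aux_map_map]
    have h1 : e.toLinearMap ∘ₗ e.symm.toLinearMap = LinearMap.id := by ext z; simp
    have h2 : f.toLinearMap ∘ₗ f.symm.toLinearMap = LinearMap.id := by ext z; simp
    rw [h1, h2]; simp
  induction n using Int.induction_on with
  | zero => simp
  | succ i ih =>
      rw [show (i:ℤ)+1 = 1+i by ring, ← aux_zpow_app (TensorProduct.congr e f) 1 i, zpow_one,
        ih, hcongr, aux_map_map]
      congr 2 <;> ext z <;>
        simp [← aux_zpow_app _ 1 i, zpow_one]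
  | pred i ih =>
      rw [show -(i:ℤ)-1 = (-1)+(-i) by ring, ← aux_zpow_app (TensorProduct.congr e f) (-1) (-i),
        zpow_neg_one, ih]
      show (TensorProduct.congr e f).symm _ = _
      rw [hcs, aux_map_map]
      congr 2 <;> ext z <;>
        rw [LinearMap.comp_apply] <;>
        simp only [LinearEquiv.coe_coe, aux_symm_zpow, aux_zpow_app] <;>
        norm_num

end AuxTensor

section AuxConv

open TensorProduct

variable {K N : Type*} [Field K] [AddCommGroup N] [Module K N]

/-- Hom-convolution product of two endomorphisms of a monoidal Hom-bialgebra. -/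
def hconv (Bb : HomBialgebraStr K N) (f g : N →ₗ[K] N) : N →ₗ[K] N :=
  TensorProduct.lift ((Bb.mul ∘ₗ f).compl₂ g) ∘ₗ Bb.comul

/-- Hom-convolution unit. -/
def hunit (Bb : HomBialgebraStr K N) : N →ₗ[K] N := Bb.counit.smulRight Bb.one

/-- Structure-map equivariance. -/
def HEquivar (Bb : HomBialgebraStr K N) (f : N →ₗ[K] N) : Prop :=
  ∀ x, f (Bb.str x) = Bb.str (f x)

theorem hconv_apply (Bb : HomBialgebraStr K N) (f g : N →ₗ[K] N) (x : N) :
    hconv Bb f g x = TensorProduct.lift ((Bb.mul ∘ₗ f).compl₂ g) (Bb.comul x) := rfl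

theorem hunit_apply (Bb : HomBialgebraStr K N) (x : N) :
    hunit Bb x = Bb.counit x • Bb.one := rfl

theorem hunit_equivar (Bb : HomBialgebraStr K N) : HEquivar Bb (hunit Bb) := by
  intro x
  simp [hunit, Bb.counit_str, map_smul, Bb.str_one]

theorem id_equivar (Bb : HomBialgebraStr K N) : HEquivar Bb LinearMap.id := fun _ => rfl

theorem hconv_equivar (Bb : HomBialgebraStr K N) {f g : N →ₗ[K] N}
    (hf : HEquivar Bb f) (hg : HEquivar Bb g) : HEquivar Bb (hconv Bb f g) := by
  intro x
  have hmap : ∀ u : N ⊗[K] N,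
      TensorProduct.lift ((Bb.mul ∘ₗ f).compl₂ g)
          (TensorProduct.map Bb.str.toLinearMap Bb.str.toLinearMap u)
        = Bb.str (TensorProduct.lift ((Bb.mul ∘ₗ f).compl₂ g) u) := by
    intro u
    induction u using TensorProduct.induction_on with
    | zero => simp
    | add y z hy hz => simp [map_add, hy, hz]
    | tmul y z =>
        simp only [TensorProduct.map_tmul, TensorProduct.lift.tmul, LinearMap.compl₂_apply,
          LinearMap.comp_apply, LinearEquiv.coe_coe]
        rw [hf, hg, Bb.str_mul]
  rw [hconv_apply, hconv_apply, Bb.comul_str, hmap]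

theorem hconv_hunit (Bb : HomBialgebraStr K N) {f : N →ₗ[K] N} (hf : HEquivar Bb f) :
    hconv Bb f (hunit Bb) = f := by
  apply LinearMap.ext; intro x
  have hmap : TensorProduct.lift ((Bb.mul ∘ₗ f).compl₂ (hunit Bb))
      = f ∘ₗ Bb.str.toLinearMap ∘ₗ (TensorProduct.rid K N).toLinearMap ∘ₗ
          TensorProduct.map LinearMap.id Bb.counit := by
    apply TensorProduct.ext'
    intro u v
    simp only [TensorProduct.lift.tmul, LinearMap.compl₂_apply, LinearMap.comp_apply,
      hunit, LinearMap.smulRight_apply, map_smul, Bb.mul_one, TensorProduct.map_tmul,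
      LinearMap.id_coe, id_eq, TensorProduct.rid_tmul, LinearEquiv.coe_coe]
    rw [hf u]
  rw [hconv_apply, hmap]
  simp only [LinearMap.comp_apply, LinearEquiv.coe_coe]
  rw [Bb.counit_comul_right]
  simp

theorem hunit_hconv (Bb : HomBialgebraStr K N) {f : N →ₗ[K] N} (hf : HEquivar Bb f) :
    hconv Bb (hunit Bb) f = f := by
  apply LinearMap.ext; intro x
  have hmap : TensorProduct.lift ((Bb.mul ∘ₗ hunit Bb).compl₂ f)
      = f ∘ₗ Bb.str.toLinearMap ∘ₗ (TensorProduct.lid K N).toLinearMap ∘ₗ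
          TensorProduct.map Bb.counit LinearMap.id := by
    apply TensorProduct.ext'
    intro u v
    simp only [TensorProduct.lift.tmul, LinearMap.compl₂_apply, LinearMap.comp_apply,
      hunit, LinearMap.smulRight_apply, map_smul, LinearMap.smul_apply, Bb.one_mul,
      TensorProduct.map_tmul,
      LinearMap.id_coe, id_eq, TensorProduct.lid_tmul, LinearEquiv.coe_coe]
    rw [hf v]
  rw [hconv_apply, hmap]
  simp only [LinearMap.comp_apply, LinearEquiv.coe_coe]
  rw [Bb.counit_comul_left]
  simp

theorem hconv_assoc (Bb : HomBialgebraStr K N) {f g h : N →ₗ[K] N}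
    (hf : HEquivar Bb f) (hh : HEquivar Bb h) :
    hconv Bb (hconv Bb f g) h = hconv Bb f (hconv Bb g h) := by
  apply LinearMap.ext; intro x
  set μ := Bb.mul
  set Δ := Bb.comul
  set L₁ : (N ⊗[K] N) ⊗[K] N →ₗ[K] N :=
    TensorProduct.lift ((μ ∘ₗ TensorProduct.lift ((μ ∘ₗ f).compl₂ g)).compl₂ h) with hL₁
  set L₂ : N ⊗[K] (N ⊗[K] N) →ₗ[K] N :=
    TensorProduct.lift ((μ ∘ₗ f).compl₂ (TensorProduct.lift ((μ ∘ₗ g).compl₂ h))) with hL₂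
  have step1 : TensorProduct.lift ((μ ∘ₗ (hconv Bb f g)).compl₂ h)
      = L₁ ∘ₗ TensorProduct.map Δ LinearMap.id := by
    apply TensorProduct.ext'
    intro u v
    simp [hconv_apply, hL₁]
    rfl
  have step2 : TensorProduct.lift ((μ ∘ₗ f).compl₂ (hconv Bb g h))
      = L₂ ∘ₗ TensorProduct.map LinearMap.id Δ := by
    apply TensorProduct.ext'
    intro u v
    simp [hconv_apply, hL₂]
    rfl
  have step3 : L₁ ∘ₗ TensorProduct.map LinearMap.id Bb.str.toLinearMap
      = L₂ ∘ₗ TensorProduct.map Bb.str.toLinearMap LinearMap.id ∘ₗ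
          (TensorProduct.assoc K N N N).toLinearMap := by
    apply TensorProduct.ext'
    intro y w
    induction y using TensorProduct.induction_on with
    | zero => simp
    | add y₁ y₂ h1 h2 =>
        simp only [add_tmul, map_add] at h1 h2 ⊢
        rw [h1, h2]
    | tmul u v =>
        simp only [LinearMap.comp_apply, TensorProduct.map_tmul, LinearEquiv.coe_coe,
          TensorProduct.assoc_tmul, TensorProduct.lift.tmul, LinearMap.compl₂_apply,
          LinearMap.id_coe, id_eq, hL₁, hL₂]
        rw [hh w, hf u]
        exact (Bb.hom_assoc (f u) (g v) (h w)).symm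
  have hid : Bb.str.toLinearMap ∘ₗ Bb.str.symm.toLinearMap = LinearMap.id := by
    ext z; simp
  set Y := TensorProduct.map Δ Bb.str.symm.toLinearMap (Δ x) with hY
  have e1 : TensorProduct.map Δ LinearMap.id (Δ x)
      = TensorProduct.map LinearMap.id Bb.str.toLinearMap Y := by
    rw [hY, aux_map_map, hid, LinearMap.id_comp]
  have e2 : TensorProduct.map LinearMap.id Δ (Δ x)
      = TensorProduct.map Bb.str.toLinearMap LinearMap.id
          ((TensorProduct.assoc K N N N) Y) := by
    rw [hY, ← Bb.hom_coassoc x, aux_map_map, hid, LinearMap.id_comp]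
  rw [hconv_apply, hconv_apply, step1, step2, LinearMap.comp_apply, LinearMap.comp_apply,
    e1, e2]
  have := LinearMap.congr_fun step3 Y
  simpa using this

end AuxConv

section Concrete

open TensorProduct

variable {K H A : Type*} [Field K] [AddCommGroup H] [Module K H] [AddCommGroup A] [Module K A]
variable (HB : HomBialgebraStr K H) (AA : HomAlgebraStr K A) (AC : HomCoalgebraStr K A)
variable (act : H →ₗ[K] A →ₗ[K] A) (coact : A →ₗ[K] H ⊗[K] A)
variable (σ : H →ₗ[K] H →ₗ[K] A) (m k : ℤ)

theorem rb_counit_zpowH (n : ℤ) (x : H) : HB.counit ((HB.str ^ n) x) = HB.counit x :=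
  aux_zpow_scalar HB.counit_str n x

theorem rb_counit_symmH (x : H) : HB.counit (HB.str.symm x) = HB.counit x := by
  rw [aux_symm_zpow]; exact rb_counit_zpowH HB (-1) x

theorem rb_counitA_zpow (n : ℤ) (x : A) : AC.counit ((AC.str ^ n) x) = AC.counit x :=
  aux_zpow_scalar AC.counit_str n x

theorem rb_counitA_symm (x : A) : AC.counit (AC.str.symm x) = AC.counit x := by
  rw [aux_symm_zpow]; exact rb_counitA_zpow AC (-1) x

theorem rb_one_zpowH (n : ℤ) : (HB.str ^ n) HB.one = HB.one :=
  aux_zpow_fix _ _ HB.str_one n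

theorem rb_one_zpowA (n : ℤ) : (AA.str ^ n) AA.one = AA.one :=
  aux_zpow_fix _ _ AA.str_one n

theorem rb_one_symmA : AA.str.symm AA.one = AA.one := by
  rw [aux_symm_zpow]; exact rb_one_zpowA AA (-1)

theorem rb_mul_zpowH (n : ℤ) (y : H ⊗[K] H) :
    TensorProduct.lift HB.mul
        (TensorProduct.map ((HB.str ^ n).toLinearMap) ((HB.str ^ n).toLinearMap) y)
      = (HB.str ^ n) (TensorProduct.lift HB.mul y) := by
  have h : ∀ y : H ⊗[K] H, TensorProduct.lift HB.mul (TensorProduct.congr HB.str HB.str y)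
      = HB.str (TensorProduct.lift HB.mul y) := by
    intro y
    induction y using TensorProduct.induction_on with
    | zero => simp
    | add a b ha hb => simp [map_add, ha, hb]
    | tmul a b => simp [HB.str_mul]
  have := aux_zpow_commute (f := TensorProduct.lift HB.mul)
    (eM := TensorProduct.congr HB.str HB.str) (eN := HB.str) h n y
  rwa [aux_congr_zpow] at this

theorem rb_comul_zpowH (n : ℤ) (x : H) :
    HB.comul ((HB.str ^ n) x)
      = TensorProduct.map ((HB.str ^ n).toLinearMap) ((HB.str ^ n).toLinearMap)
          (HB.comul x) := by
  have h : ∀ x : H, HB.comul (HB.str x) = TensorProduct.congr HB.str HB.str (HB.comul x) := by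
    intro x
    rw [HB.comul_str]
    induction (HB.comul x) using TensorProduct.induction_on with
    | zero => simp
    | add a b ha hb => simp [map_add, ha, hb]
    | tmul a b => simp
  have := aux_zpow_commute (f := HB.comul)
    (eM := HB.str) (eN := TensorProduct.congr HB.str HB.str) h n x
  rwa [aux_congr_zpow] at this

/-- The `(m,k)`-crossed product multiplication as a linear map of `Δh ⊗ Δg`. -/
def cpCore (a b : A) : (H ⊗[K] H) ⊗[K] (H ⊗[K] H) →ₗ[K] A ⊗[K] H :=
  TensorProduct.map
    ((AA.mul a) ∘ₗ TensorProduct.lift AA.mul ∘ₗ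
      TensorProduct.map
        ((act.flip ((AA.str ^ (-2 : ℤ)) b)) ∘ₗ (HB.str ^ m).toLinearMap)
        (TensorProduct.lift σ ∘ₗ
          TensorProduct.map (HB.str ^ (k+1)).toLinearMap (HB.str ^ k).toLinearMap) ∘ₗ
      (TensorProduct.assoc K H H H).toLinearMap)
    (HB.str.toLinearMap ∘ₗ TensorProduct.lift HB.mul)
  ∘ₗ TensorProduct.map (TensorProduct.map HB.comul (LinearMap.id : H →ₗ[K] H))
      (LinearMap.id : H ⊗[K] H →ₗ[K] H ⊗[K] H)
  ∘ₗ (TensorProduct.tensorTensorTensorComm K H H H H).toLinearMap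

theorem rb_cpMulElem_eq (a b : A) (h g : H) :
    cpMulElem HB AA act σ m k a h b g
      = cpCore HB AA act σ m k a b (HB.comul h ⊗ₜ[K] HB.comul g) := rfl

theorem rb_mul_tmul (B : HomBialgebraStr K (A ⊗[K] H))
    (hB : IsRadfordBiproduct HB AA AC act coact σ m k B) (a b : A) (h g : H) :
    B.mul (a ⊗ₜ[K] h) (b ⊗ₜ[K] g)
      = cpCore HB AA act σ m k a b (HB.comul h ⊗ₜ[K] HB.comul g) := by
  rw [hB.mul_def, rb_cpMulElem_eq]

/-- Left component of `cpCore` on `(1⊗1) ⊗ z`. -/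
def cpJ₁ (a b : A) : H →ₗ[K] A :=
  (AA.mul a) ∘ₗ (AA.mul ((act HB.one) ((AA.str ^ (-2 : ℤ)) b))) ∘ₗ (σ HB.one)
    ∘ₗ (HB.str ^ k).toLinearMap

def cpJ₂ : H →ₗ[K] H := HB.str.toLinearMap ∘ₗ (HB.mul HB.one)

theorem rb_cpkey (a b : A) (z : H ⊗[K] H) :
    cpCore HB AA act σ m k a b ((HB.one ⊗ₜ[K] HB.one) ⊗ₜ[K] z)
      = TensorProduct.map (cpJ₁ HB AA act σ k a b) (cpJ₂ HB) z := by
  induction z using TensorProduct.induction_on with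
  | zero => simp
  | add z₁ z₂ h1 h2 => rw [tmul_add, map_add, map_add, h1, h2]
  | tmul g₁ g₂ =>
      simp only [cpCore, cpJ₁, cpJ₂, LinearMap.comp_apply, LinearEquiv.coe_coe,
        tensorTensorTensorComm_tmul, TensorProduct.map_tmul, LinearMap.id_coe, id_eq,
        HB.comul_one, TensorProduct.assoc_tmul, TensorProduct.lift.tmul,
        LinearMap.flip_apply]
      rw [rb_one_zpowH, rb_one_zpowH]

theorem rb_sigma_one (hact : IsWeakModuleAlgebra HB AA act)
    (B : HomBialgebraStr K (A ⊗[K] H)) (hB : IsRadfordBiproduct HB AA AC act coact σ m k B)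
    (g : H) : σ HB.one g = HB.counit g • AA.one := by
  have hao : act HB.one AA.one = AA.one := by rw [hact.act_one, HB.counit_one, one_smul]
  have main : ∀ g : H,
      AA.str (AA.str (σ HB.one ((HB.str ^ (k-1)) g))) = HB.counit g • AA.one := by
    intro g
    have h0 := B.one_mul (AA.one ⊗ₜ[K] g)
    rw [hB.one_def, hB.str_def, rb_mul_tmul HB AA AC act coact σ m k B hB, HB.comul_one,
      rb_cpkey, TensorProduct.congr_tmul, AA.str_one] at h0
    have h1 := congrArg (fun t => (TensorProduct.rid K A)
      (TensorProduct.map (LinearMap.id : A →ₗ[K] A) HB.counit t)) h0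
    rw [aux_map_map, LinearMap.id_comp] at h1
    have hJ₂ : HB.counit ∘ₗ cpJ₂ HB = HB.counit := by
      apply LinearMap.ext; intro y
      simp only [cpJ₂, LinearMap.comp_apply, LinearEquiv.coe_coe]
      rw [HB.counit_str, HB.counit_mul, HB.counit_one, one_mul]
    rw [hJ₂, aux_rid_nat, HB.counit_comul_right] at h1
    simp only [TensorProduct.map_tmul, LinearMap.id_coe, id_eq, TensorProduct.rid_tmul,
      HB.counit_str] at h1
    -- h1 : cpJ₁ 1 1 (α.symm g) = ε g • 1
    simp only [cpJ₁, LinearMap.comp_apply, LinearEquiv.coe_coe] at h1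
    rw [rb_one_zpowA, hao, AA.one_mul, AA.one_mul, aux_symm_zpow, aux_zpow_app,
      show k + (-1:ℤ) = k - 1 by ring] at h1
    exact h1
  have h2 := main ((HB.str ^ (1-k)) g)
  rw [aux_zpow_app, show (k-1)+(1-k) = (0:ℤ) by ring, aux_zpow_zero,
    rb_counit_zpowH] at h2
  have h3 : σ HB.one g = AA.str.symm (AA.str.symm (HB.counit g • AA.one)) := by
    rw [← h2, LinearEquiv.symm_apply_apply, LinearEquiv.symm_apply_apply]
  rw [h3, map_smul, map_smul, rb_one_symmA, rb_one_symmA]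

theorem rb_act_one (hact : IsWeakModuleAlgebra HB AA act)
    (B : HomBialgebraStr K (A ⊗[K] H)) (hB : IsRadfordBiproduct HB AA AC act coact σ m k B)
    (c : A) : act HB.one c = AA.str c := by
  have main : ∀ c : A,
      AA.str (AA.str (act HB.one ((AA.str ^ (-2:ℤ)) c))) = AA.str c := by
    intro c
    have h0 := B.one_mul (c ⊗ₜ[K] HB.one)
    rw [hB.one_def, hB.str_def, rb_mul_tmul HB AA AC act coact σ m k B hB, HB.comul_one,
      rb_cpkey, TensorProduct.congr_tmul, HB.str_one] at h0
    rw [TensorProduct.map_tmul] at h0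
    have hJ2 : cpJ₂ HB HB.one = HB.one := by
      simp only [cpJ₂, LinearMap.comp_apply, LinearEquiv.coe_coe]
      rw [HB.one_mul, HB.str_one, HB.str_one]
    rw [hJ2] at h0
    have h1 := congrArg (fun t => (TensorProduct.rid K A)
      (TensorProduct.map (LinearMap.id : A →ₗ[K] A) HB.counit t)) h0
    simp only [TensorProduct.map_tmul, LinearMap.id_coe, id_eq, TensorProduct.rid_tmul,
      HB.counit_one, one_smul] at h1
    -- h1 : cpJ₁ 1 c 1 = β c
    simp only [cpJ₁, LinearMap.comp_apply, LinearEquiv.coe_coe] at h1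
    rw [rb_one_zpowH, rb_sigma_one HB AA AC act coact σ m k hact B hB, HB.counit_one,
      one_smul, AA.mul_one, AA.one_mul] at h1
    exact h1
  have h2 := main ((AA.str ^ (2:ℤ)) c)
  rw [aux_zpow_app, show (-2:ℤ)+2 = (0:ℤ) by ring, aux_zpow_zero] at h2
  apply AA.str.injective; apply AA.str.injective
  rw [h2, aux_zpow_two]

theorem rb_mul_b1c1 (hact : IsWeakModuleAlgebra HB AA act)
    (B : HomBialgebraStr K (A ⊗[K] H)) (hB : IsRadfordBiproduct HB AA AC act coact σ m k B)
    (b c : A) :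
    B.mul (b ⊗ₜ[K] HB.one) (c ⊗ₜ[K] HB.one) = AA.mul b c ⊗ₜ[K] HB.one := by
  rw [rb_mul_tmul HB AA AC act coact σ m k B hB, HB.comul_one, rb_cpkey,
    TensorProduct.map_tmul]
  have hJ2 : cpJ₂ HB HB.one = HB.one := by
    simp only [cpJ₂, LinearMap.comp_apply, LinearEquiv.coe_coe]
    rw [HB.one_mul, HB.str_one, HB.str_one]
  rw [hJ2]
  simp only [cpJ₁, LinearMap.comp_apply, LinearEquiv.coe_coe]
  rw [rb_one_zpowH, rb_sigma_one HB AA AC act coact σ m k hact B hB, HB.counit_one,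
    one_smul, AA.mul_one, rb_act_one HB AA AC act coact σ m k hact B hB]
  congr 2
  rw [← aux_zpow_two, aux_zpow_app, show (2:ℤ) + -2 = 0 by norm_num, aux_zpow_zero]

theorem rb_mul_b1_1g (hact : IsWeakModuleAlgebra HB AA act)
    (B : HomBialgebraStr K (A ⊗[K] H)) (hB : IsRadfordBiproduct HB AA AC act coact σ m k B)
    (b : A) (g : H) :
    B.mul (b ⊗ₜ[K] HB.one) (AA.one ⊗ₜ[K] g) = AA.str b ⊗ₜ[K] HB.str g := by
  rw [rb_mul_tmul HB AA AC act coact σ m k B hB, HB.comul_one, rb_cpkey]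
  have hJ : cpJ₁ HB AA act σ k b AA.one = HB.counit.smulRight (AA.str b) := by
    apply LinearMap.ext; intro g₁
    simp only [cpJ₁, LinearMap.comp_apply, LinearEquiv.coe_coe, LinearMap.smulRight_apply]
    rw [rb_one_zpowA, rb_act_one HB AA AC act coact σ m k hact B hB, AA.str_one,
      rb_sigma_one HB AA AC act coact σ m k hact B hB, rb_counit_zpowH]
    simp [map_smul, AA.one_mul, AA.str_one, AA.mul_one]
  rw [hJ, aux_smulRight_collapse, HB.counit_comul_left]
  congr 1
  simp only [cpJ₂, LinearMap.comp_apply, LinearEquiv.coe_coe]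
  rw [HB.one_mul, LinearEquiv.apply_symm_apply]

/-- The σ-part of the product `(1⊗w)(1⊗g)`. -/
def rbLσ : H ⊗[K] H →ₗ[K] A :=
  AA.str.toLinearMap ∘ₗ AA.str.toLinearMap ∘ₗ TensorProduct.lift σ ∘ₗ
    TensorProduct.map (HB.str ^ k).toLinearMap (HB.str ^ k).toLinearMap

def rbLμ : H ⊗[K] H →ₗ[K] H := HB.str.toLinearMap ∘ₗ TensorProduct.lift HB.mul

theorem rb_mul_1w_1g (hact : IsWeakModuleAlgebra HB AA act)
    (B : HomBialgebraStr K (A ⊗[K] H)) (hB : IsRadfordBiproduct HB AA AC act coact σ m k B)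
    (w g : H) :
    B.mul (AA.one ⊗ₜ[K] w) (AA.one ⊗ₜ[K] g)
      = TensorProduct.map (rbLσ HB AA σ k) (rbLμ HB)
          (TensorProduct.tensorTensorTensorComm K H H H H
            (HB.comul w ⊗ₜ[K] HB.comul g)) := by
  rw [rb_mul_tmul HB AA AC act coact σ m k B hB]
  set F₁₁ : (H ⊗[K] H) ⊗[K] H →ₗ[K] A :=
    (AA.mul AA.one) ∘ₗ TensorProduct.lift AA.mul ∘ₗ
      TensorProduct.map
        ((act.flip ((AA.str ^ (-2 : ℤ)) AA.one)) ∘ₗ (HB.str ^ m).toLinearMap)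
        (TensorProduct.lift σ ∘ₗ
          TensorProduct.map (HB.str ^ (k+1)).toLinearMap (HB.str ^ k).toLinearMap) ∘ₗ
      (TensorProduct.assoc K H H H).toLinearMap with hF₁₁
  have hsub : ∀ (y : H ⊗[K] H) (g₁ : H),
      F₁₁ (y ⊗ₜ[K] g₁)
        = AA.str (AA.str (σ ((HB.str ^ (k+1))
            (TensorProduct.lid K H (TensorProduct.map HB.counit LinearMap.id y)))
            ((HB.str ^ k) g₁))) := by
    intro y g₁
    induction y using TensorProduct.induction_on with
    | zero => simp
    | add y₁ y₂ h1 h2 =>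
        simp only [add_tmul, map_add, LinearMap.add_apply, h1, h2]
    | tmul w₁ w₂ =>
        simp only [hF₁₁, LinearMap.comp_apply, LinearEquiv.coe_coe,
          TensorProduct.assoc_tmul, TensorProduct.map_tmul, TensorProduct.lift.tmul,
          LinearMap.flip_apply, TensorProduct.lid_tmul, LinearMap.id_coe, id_eq]
        rw [rb_one_zpowA, hact.act_one, rb_counit_zpowH]
        simp [map_smul, AA.one_mul]
  have hcomp : (F₁₁ ∘ₗ TensorProduct.map HB.comul (LinearMap.id : H →ₗ[K] H))
      = rbLσ HB AA σ k := by
    apply TensorProduct.ext'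
    intro w' g₁
    simp only [LinearMap.comp_apply, TensorProduct.map_tmul, LinearMap.id_coe, id_eq]
    rw [hsub, HB.counit_comul_left, aux_symm_zpow, aux_zpow_app,
      show (k+1) + (-1:ℤ) = k by ring]
    simp only [rbLσ, LinearMap.comp_apply, LinearEquiv.coe_coe, TensorProduct.map_tmul,
      TensorProduct.lift.tmul]
  show (TensorProduct.map F₁₁ (HB.str.toLinearMap ∘ₗ TensorProduct.lift HB.mul))
      ((TensorProduct.map (TensorProduct.map HB.comul (LinearMap.id : H →ₗ[K] H))
        (LinearMap.id : H ⊗[K] H →ₗ[K] H ⊗[K] H))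
        ((TensorProduct.tensorTensorTensorComm K H H H H) (HB.comul w ⊗ₜ[K] HB.comul g)))
    = _
  rw [aux_map_map, hcomp, LinearMap.comp_id]
  rfl


theorem rb_one_symmH : HB.str.symm HB.one = HB.one := by
  rw [aux_symm_zpow]; exact rb_one_zpowH HB (-1)

/-- Key plumbing lemma: evaluation of a bilinear functional against the smash coproduct. -/
theorem rb_sckey {V : Type*} [AddCommGroup V] [Module K V]
    (T : (A ⊗[K] H) →ₗ[K] (A ⊗[K] H) →ₗ[K] V)
    (W : (A ⊗[K] (H ⊗[K] A)) ⊗[K] (H ⊗[K] H) →ₗ[K] V)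
    (hTW : ∀ (a₁ : A) (w : H) (v : A) (g₁ g₂ : H),
      T (a₁ ⊗ₜ[K] HB.mul ((HB.str ^ m) w) ((HB.str ^ (-1:ℤ)) g₁)) ((AC.str v) ⊗ₜ[K] g₂)
        = W ((a₁ ⊗ₜ[K] (w ⊗ₜ[K] v)) ⊗ₜ[K] (g₁ ⊗ₜ[K] g₂)))
    (u : A ⊗[K] (H ⊗[K] A)) (z : H ⊗[K] H) :
    TensorProduct.lift T
        (TensorProduct.map
          (TensorProduct.map (LinearMap.id : A →ₗ[K] A)
              (TensorProduct.lift HB.mul ∘ₗ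
                TensorProduct.map (HB.str ^ m).toLinearMap (HB.str ^ (-1 : ℤ)).toLinearMap) ∘ₗ
            (TensorProduct.assoc K A H H).toLinearMap)
          (TensorProduct.map AC.str.toLinearMap (LinearMap.id : H →ₗ[K] H))
          (TensorProduct.tensorTensorTensorComm K (A ⊗[K] H) A H H
            ((TensorProduct.assoc K A H A).symm u ⊗ₜ[K] z)))
      = W (u ⊗ₜ[K] z) := by
  induction u using TensorProduct.induction_on with
  | zero => simp
  | add u₁ u₂ h1 h2 => simp only [map_add, add_tmul, LinearEquiv.map_add, h1, h2]
  | tmul a₁ r =>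
      induction r using TensorProduct.induction_on with
      | zero => simp
      | add r₁ r₂ h1 h2 =>
          simp only [map_add, tmul_add, add_tmul, LinearEquiv.map_add, h1, h2]
      | tmul w v =>
          induction z using TensorProduct.induction_on with
          | zero => simp
          | add z₁ z₂ h1 h2 => simp only [map_add, tmul_add, LinearEquiv.map_add, h1, h2]
          | tmul g₁ g₂ =>
              have := hTW a₁ w v g₁ g₂
              simpa only [TensorProduct.assoc_symm_tmul, tensorTensorTensorComm_tmul,
                TensorProduct.map_tmul, LinearMap.comp_apply, LinearEquiv.coe_coe,
                TensorProduct.assoc_tmul, TensorProduct.lift.tmul, LinearMap.id_coe,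
                id_eq] using this

/-- Evaluation of a bilinear functional against the comultiplication of `B`. -/
theorem rb_sckeyB {V : Type*} [AddCommGroup V] [Module K V]
    (B : HomBialgebraStr K (A ⊗[K] H)) (hB : IsRadfordBiproduct HB AA AC act coact σ m k B)
    (T : (A ⊗[K] H) →ₗ[K] (A ⊗[K] H) →ₗ[K] V)
    (W : (A ⊗[K] (H ⊗[K] A)) ⊗[K] (H ⊗[K] H) →ₗ[K] V)
    (hTW : ∀ (a₁ : A) (w : H) (v : A) (g₁ g₂ : H),
      T (a₁ ⊗ₜ[K] HB.mul ((HB.str ^ m) w) ((HB.str ^ (-1:ℤ)) g₁)) ((AC.str v) ⊗ₜ[K] g₂)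
        = W ((a₁ ⊗ₜ[K] (w ⊗ₜ[K] v)) ⊗ₜ[K] (g₁ ⊗ₜ[K] g₂)))
    (a : A) (h : H) :
    TensorProduct.lift T (B.comul (a ⊗ₜ[K] h))
      = W ((TensorProduct.map (LinearMap.id : A →ₗ[K] A) coact (AC.comul a))
          ⊗ₜ[K] HB.comul h) := by
  rw [hB.comul_def]
  exact rb_sckey (HB := HB) (AC := AC) (m := m) T W hTW _ _

theorem rb_strAC (hcc : IsComoduleCoalgebra HB AC coact) (B : HomBialgebraStr K (A ⊗[K] H))
    (hB : IsRadfordBiproduct HB AA AC act coact σ m k B) (a : A) :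
    AC.str a = AA.str a := by
  have hsymm : ∀ a : A, AC.str.symm a = AA.str.symm a := by
    intro a
    have h0 := B.counit_comul_right (a ⊗ₜ[K] HB.one)
    set T : (A ⊗[K] H) →ₗ[K] (A ⊗[K] H) →ₗ[K] (A ⊗[K] H) :=
      ((LinearMap.lsmul K (A ⊗[K] H)) ∘ₗ B.counit).flip with hTdef
    have hT : ∀ X : (A ⊗[K] H) ⊗[K] (A ⊗[K] H),
        TensorProduct.rid K (A ⊗[K] H)
            (TensorProduct.map (LinearMap.id : A ⊗[K] H →ₗ[K] A ⊗[K] H) B.counit X)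
          = TensorProduct.lift T X := by
      intro X
      induction X using TensorProduct.induction_on with
      | zero => simp
      | add x y hx hy => simp only [map_add, hx, hy]
      | tmul x y => simp [hTdef]
    rw [hT] at h0
    set U₁ : A ⊗[K] (H ⊗[K] A) →ₗ[K] A ⊗[K] H :=
      TensorProduct.map (LinearMap.id : A →ₗ[K] A)
        ((TensorProduct.rid K H).toLinearMap ∘ₗ
          TensorProduct.map (LinearMap.id : H →ₗ[K] H) AC.counit) with hU₁
    set U₂ : H ⊗[K] H →ₗ[K] H :=
      (HB.str ^ (-1:ℤ)).toLinearMap ∘ₗ (TensorProduct.rid K H).toLinearMap ∘ₗ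
        TensorProduct.map (LinearMap.id : H →ₗ[K] H) HB.counit with hU₂
    set V : (A ⊗[K] H) ⊗[K] H →ₗ[K] A ⊗[K] H :=
      TensorProduct.map (LinearMap.id : A →ₗ[K] A)
          (TensorProduct.lift HB.mul ∘ₗ
            TensorProduct.map (HB.str ^ m).toLinearMap (LinearMap.id : H →ₗ[K] H)) ∘ₗ
        (TensorProduct.assoc K A H H).toLinearMap with hV
    have hkey := rb_sckeyB (HB := HB) (AA := AA) (AC := AC) (act := act)
      (coact := coact) (σ := σ) (m := m) (k := k) (B := B) (hB := hB) (T := T)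
      (W := V ∘ₗ TensorProduct.map U₁ U₂)
      (hTW := by
        intro a₁ w v g₁ g₂
        simp only [hTdef, hU₁, hU₂, hV, LinearMap.comp_apply, LinearMap.flip_apply,
          LinearMap.lsmul_apply, TensorProduct.map_tmul, LinearMap.id_coe, id_eq,
          LinearEquiv.coe_coe, TensorProduct.rid_tmul, TensorProduct.assoc_tmul,
          TensorProduct.lift.tmul, hB.counit_def, AC.counit_str]
        simp [smul_tmul', tmul_smul, smul_smul, mul_comm]) (a := a) (h := HB.one)
    rw [hkey, HB.comul_one] at h0
    -- now simplify the right-hand side of hkey inside h0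
    rw [LinearMap.comp_apply, TensorProduct.map_tmul] at h0
    have hU₂1 : U₂ (HB.one ⊗ₜ[K] HB.one) = HB.one := by
      simp only [hU₂, LinearMap.comp_apply, TensorProduct.map_tmul, LinearMap.id_coe,
        id_eq, LinearEquiv.coe_coe, TensorProduct.rid_tmul, HB.counit_one, one_smul]
      exact rb_one_zpowH HB (-1)
    rw [hU₂1] at h0
    have hU₁u : U₁ (TensorProduct.map (LinearMap.id : A →ₗ[K] A) coact (AC.comul a))
        = TensorProduct.map (LinearMap.id : A →ₗ[K] A) (AC.counit.smulRight HB.one)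
            (AC.comul a) := by
      rw [hU₁, aux_map_map, LinearMap.id_comp]
      have hx : ((TensorProduct.rid K H).toLinearMap ∘ₗ
            TensorProduct.map (LinearMap.id : H →ₗ[K] H) AC.counit) ∘ₗ coact
          = AC.counit.smulRight HB.one := by
        apply LinearMap.ext; intro c
        simp only [LinearMap.comp_apply, LinearEquiv.coe_coe, LinearMap.smulRight_apply]
        exact hcc.counit_coact_one c
      rw [hx]
    rw [hU₁u] at h0
    have hVfin : ∀ u : A ⊗[K] A,
        V ((TensorProduct.map (LinearMap.id : A →ₗ[K] A) (AC.counit.smulRight HB.one) u)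
            ⊗ₜ[K] HB.one)
          = (TensorProduct.rid K A
              (TensorProduct.map (LinearMap.id : A →ₗ[K] A) AC.counit u)) ⊗ₜ[K] HB.one := by
      intro u
      induction u using TensorProduct.induction_on with
      | zero => simp
      | add x y hx hy => simp only [map_add, add_tmul, hx, hy]
      | tmul a₁ a₂ =>
          simp only [hV, TensorProduct.map_tmul, LinearMap.id_coe, id_eq,
            LinearMap.smulRight_apply, LinearMap.comp_apply, LinearEquiv.coe_coe,
            TensorProduct.assoc_tmul, TensorProduct.lift.tmul, TensorProduct.rid_tmul]
          simp [map_smul, rb_one_zpowH, HB.mul_one, HB.str_one, smul_tmul', tmul_smul,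
            LinearMap.smul_apply]
    rw [hVfin, AC.counit_comul_right, hB.str_def] at h0
    have hsy : (TensorProduct.congr AA.str HB.str).symm (a ⊗ₜ[K] HB.one)
        = AA.str.symm a ⊗ₜ[K] HB.one := by
      apply (TensorProduct.congr AA.str HB.str).injective
      rw [LinearEquiv.apply_symm_apply, TensorProduct.congr_tmul,
        LinearEquiv.apply_symm_apply, HB.str_one]
    rw [hsy] at h0
    have h1 := congrArg (fun t => (TensorProduct.rid K A)
      (TensorProduct.map (LinearMap.id : A →ₗ[K] A) HB.counit t)) h0
    simpa [HB.counit_one] using h1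
  have h4 := hsymm (AC.str a)
  rw [LinearEquiv.symm_apply_apply] at h4
  conv_rhs => rw [h4]
  rw [LinearEquiv.apply_symm_apply]

/-- `F(b ⊗ g) = ε(g) • (b ⊗ 1)`. -/
def rbF : A ⊗[K] H →ₗ[K] A ⊗[K] H :=
  TensorProduct.map LinearMap.id (HB.counit.smulRight HB.one)

/-- `G(b ⊗ g) = ε_A(b) • (1 ⊗ g)`. -/
def rbG : A ⊗[K] H →ₗ[K] A ⊗[K] H :=
  TensorProduct.map (AC.counit.smulRight AA.one) LinearMap.id

/-- `F'(b ⊗ g) = ε(g) • (S_A(b) ⊗ 1)`. -/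
def rbF' (SA : A →ₗ[K] A) : A ⊗[K] H →ₗ[K] A ⊗[K] H :=
  TensorProduct.map SA (HB.counit.smulRight HB.one)

/-- `G'(b ⊗ g) = ε_A(b) • (1 ⊗ S_H(g))`. -/
def rbG' (SH : H →ₗ[K] H) : A ⊗[K] H →ₗ[K] A ⊗[K] H :=
  TensorProduct.map (AC.counit.smulRight AA.one) SH

theorem rb_equivar_of_comps (B : HomBialgebraStr K (A ⊗[K] H))
    (hB : IsRadfordBiproduct HB AA AC act coact σ m k B)
    {fA : A →ₗ[K] A} {fH : H →ₗ[K] H}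
    (hA : ∀ b, fA (AA.str b) = AA.str (fA b)) (hH : ∀ g, fH (HB.str g) = HB.str (fH g)) :
    HEquivar B (TensorProduct.map fA fH) := by
  intro x
  rw [hB.str_def]
  induction x using TensorProduct.induction_on with
  | zero => simp
  | add x y hx hy => simp only [map_add, LinearEquiv.map_add, hx, hy]
  | tmul b g => simp [TensorProduct.congr_tmul, hA, hH]

theorem rb_smulRightH_str (g : H) :
    (HB.counit.smulRight HB.one) (HB.str g) = HB.str ((HB.counit.smulRight HB.one) g) := by
  simp [HB.counit_str, HB.str_one, map_smul]

theorem rb_smulRightA_str (hcc : IsComoduleCoalgebra HB AC coact)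
    (B : HomBialgebraStr K (A ⊗[K] H))
    (hB : IsRadfordBiproduct HB AA AC act coact σ m k B) (b : A) :
    (AC.counit.smulRight AA.one) (AA.str b) = AA.str ((AC.counit.smulRight AA.one) b) := by
  rw [← rb_strAC HB AA AC act coact σ m k hcc B hB b]
  simp [AC.counit_str, AA.str_one, map_smul]

/-- `Σ (1 ⊗ h₁)(1 ⊗ S_H h₂) = ε(h) (1⊗1)`. -/
theorem rb_K1 (hact : IsWeakModuleAlgebra HB AA act)
    (B : HomBialgebraStr K (A ⊗[K] H))
    (hB : IsRadfordBiproduct HB AA AC act coact σ m k B)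
    (SH : H →ₗ[K] H) (hSH : IsSigmaAntipode HB AA σ SH) (h : H) :
    TensorProduct.lift B.mul
        (TensorProduct.map (TensorProduct.mk K A H AA.one)
          ((TensorProduct.mk K A H AA.one) ∘ₗ SH) (HB.comul h))
      = HB.counit h • (AA.one ⊗ₜ[K] HB.one) := by
  have hK : TensorProduct.lift B.mul ∘ₗ
        TensorProduct.map (TensorProduct.mk K A H AA.one)
          ((TensorProduct.mk K A H AA.one) ∘ₗ SH)
      = TensorProduct.map (rbLσ HB AA σ k) (rbLμ HB) ∘ₗ
          (TensorProduct.tensorTensorTensorComm K H H H H).toLinearMap ∘ₗ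
          TensorProduct.map HB.comul (HB.comul ∘ₗ SH) := by
    apply TensorProduct.ext'
    intro g₁ g₂
    simp only [LinearMap.comp_apply, TensorProduct.map_tmul, TensorProduct.lift.tmul,
      TensorProduct.mk_apply, LinearEquiv.coe_coe]
    exact rb_mul_1w_1g HB AA AC act coact σ m k hact B hB g₁ (SH g₂)
  have hKh := LinearMap.congr_fun hK (HB.comul h)
  simp only [LinearMap.comp_apply, LinearEquiv.coe_coe] at hKh
  rw [hKh]
  have hsh := hSH.right ((HB.str ^ k) h)
  rw [rb_comul_zpowH, rb_counit_zpowH] at hsh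
  have e₁ : TensorProduct.map HB.comul (HB.comul ∘ₗ SH)
      (TensorProduct.map (HB.str ^ k).toLinearMap (HB.str ^ k).toLinearMap (HB.comul h))
      = TensorProduct.map
          (TensorProduct.map (HB.str ^ k).toLinearMap (HB.str ^ k).toLinearMap)
          (TensorProduct.map (HB.str ^ k).toLinearMap (HB.str ^ k).toLinearMap)
          (TensorProduct.map HB.comul (HB.comul ∘ₗ SH) (HB.comul h)) := by
    rw [aux_map_map, aux_map_map]
    congr 2
    · apply LinearMap.ext; intro x
      simp only [LinearMap.comp_apply, LinearEquiv.coe_coe]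
      rw [rb_comul_zpowH]
    · apply LinearMap.ext; intro x
      simp only [LinearMap.comp_apply, LinearEquiv.coe_coe]
      rw [aux_zpow_commute hSH.antipode_str, rb_comul_zpowH]
  rw [e₁, aux_tttc_nat, aux_map_map] at hsh
  have happ := congrArg (TensorProduct.map
    (AA.str.toLinearMap ∘ₗ AA.str.toLinearMap) ((HB.str ^ (1-k)).toLinearMap)) hsh
  rw [aux_map_map, map_smul, TensorProduct.map_tmul] at happ
  have c1 : (AA.str.toLinearMap ∘ₗ AA.str.toLinearMap) ∘ₗ
      (TensorProduct.lift σ ∘ₗ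
        TensorProduct.map (HB.str ^ k).toLinearMap (HB.str ^ k).toLinearMap)
      = rbLσ HB AA σ k := by
    apply LinearMap.ext; intro y; rfl
  have c2 : (HB.str ^ (1-k)).toLinearMap ∘ₗ
      (TensorProduct.lift HB.mul ∘ₗ
        TensorProduct.map (HB.str ^ k).toLinearMap (HB.str ^ k).toLinearMap)
      = rbLμ HB := by
    apply LinearMap.ext; intro y
    simp only [LinearMap.comp_apply, LinearEquiv.coe_coe]
    rw [rb_mul_zpowH, aux_zpow_app, show (1-k)+k = (1:ℤ) by ring, zpow_one]
    rfl
  rw [c1, c2] at happ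
  rw [happ, LinearMap.comp_apply, LinearEquiv.coe_coe, LinearEquiv.coe_coe, AA.str_one,
    AA.str_one, rb_one_zpowH]

/-- `Σ (1 ⊗ S_H h₁)(1 ⊗ h₂) = ε(h) (1⊗1)`. -/
theorem rb_K2 (hact : IsWeakModuleAlgebra HB AA act)
    (B : HomBialgebraStr K (A ⊗[K] H))
    (hB : IsRadfordBiproduct HB AA AC act coact σ m k B)
    (SH : H →ₗ[K] H) (hSH : IsSigmaAntipode HB AA σ SH) (h : H) :
    TensorProduct.lift B.mul
        (TensorProduct.map ((TensorProduct.mk K A H AA.one) ∘ₗ SH)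
          (TensorProduct.mk K A H AA.one) (HB.comul h))
      = HB.counit h • (AA.one ⊗ₜ[K] HB.one) := by
  have hK : TensorProduct.lift B.mul ∘ₗ
        TensorProduct.map ((TensorProduct.mk K A H AA.one) ∘ₗ SH)
          (TensorProduct.mk K A H AA.one)
      = TensorProduct.map (rbLσ HB AA σ k) (rbLμ HB) ∘ₗ
          (TensorProduct.tensorTensorTensorComm K H H H H).toLinearMap ∘ₗ
          TensorProduct.map (HB.comul ∘ₗ SH) HB.comul := by
    apply TensorProduct.ext'
    intro g₁ g₂
    simp only [LinearMap.comp_apply, TensorProduct.map_tmul, TensorProduct.lift.tmul,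
      TensorProduct.mk_apply, LinearEquiv.coe_coe]
    exact rb_mul_1w_1g HB AA AC act coact σ m k hact B hB (SH g₁) g₂
  have hKh := LinearMap.congr_fun hK (HB.comul h)
  simp only [LinearMap.comp_apply, LinearEquiv.coe_coe] at hKh
  rw [hKh]
  have hsh := hSH.left ((HB.str ^ k) h)
  rw [rb_comul_zpowH, rb_counit_zpowH] at hsh
  have e₁ : TensorProduct.map (HB.comul ∘ₗ SH) HB.comul
      (TensorProduct.map (HB.str ^ k).toLinearMap (HB.str ^ k).toLinearMap (HB.comul h))
      = TensorProduct.map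
          (TensorProduct.map (HB.str ^ k).toLinearMap (HB.str ^ k).toLinearMap)
          (TensorProduct.map (HB.str ^ k).toLinearMap (HB.str ^ k).toLinearMap)
          (TensorProduct.map (HB.comul ∘ₗ SH) HB.comul (HB.comul h)) := by
    rw [aux_map_map, aux_map_map]
    congr 2
    · apply LinearMap.ext; intro x
      simp only [LinearMap.comp_apply, LinearEquiv.coe_coe]
      rw [aux_zpow_commute hSH.antipode_str, rb_comul_zpowH]
    · apply LinearMap.ext; intro x
      simp only [LinearMap.comp_apply, LinearEquiv.coe_coe]
      rw [rb_comul_zpowH]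
  rw [e₁, aux_tttc_nat, aux_map_map] at hsh
  have happ := congrArg (TensorProduct.map
    (AA.str.toLinearMap ∘ₗ AA.str.toLinearMap) ((HB.str ^ (1-k)).toLinearMap)) hsh
  rw [aux_map_map, map_smul, TensorProduct.map_tmul] at happ
  have c1 : (AA.str.toLinearMap ∘ₗ AA.str.toLinearMap) ∘ₗ
      (TensorProduct.lift σ ∘ₗ
        TensorProduct.map (HB.str ^ k).toLinearMap (HB.str ^ k).toLinearMap)
      = rbLσ HB AA σ k := by
    apply LinearMap.ext; intro y; rfl
  have c2 : (HB.str ^ (1-k)).toLinearMap ∘ₗ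
      (TensorProduct.lift HB.mul ∘ₗ
        TensorProduct.map (HB.str ^ k).toLinearMap (HB.str ^ k).toLinearMap)
      = rbLμ HB := by
    apply LinearMap.ext; intro y
    simp only [LinearMap.comp_apply, LinearEquiv.coe_coe]
    rw [rb_mul_zpowH, aux_zpow_app, show (1-k)+k = (1:ℤ) by ring, zpow_one]
    rfl
  rw [c1, c2] at happ
  rw [happ, LinearMap.comp_apply, LinearEquiv.coe_coe, LinearEquiv.coe_coe, AA.str_one,
    AA.str_one, rb_one_zpowH]

theorem rb_conv_FG (hact : IsWeakModuleAlgebra HB AA act)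
    (hcc : IsComoduleCoalgebra HB AC coact)
    (B : HomBialgebraStr K (A ⊗[K] H))
    (hB : IsRadfordBiproduct HB AA AC act coact σ m k B) :
    hconv B (rbF HB) (rbG AA AC) = LinearMap.id := by
  apply TensorProduct.ext'
  intro a h
  rw [hconv_apply]
  set sHA : H ⊗[K] A →ₗ[K] K :=
    AC.counit ∘ₗ (TensorProduct.lid K A).toLinearMap ∘ₗ
      TensorProduct.map HB.counit LinearMap.id with hsHA
  set T₁ : A ⊗[K] (H ⊗[K] A) →ₗ[K] A :=
    AA.str.toLinearMap ∘ₗ (TensorProduct.rid K A).toLinearMap ∘ₗ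
      TensorProduct.map LinearMap.id sHA with hT₁
  set T₂ : H ⊗[K] H →ₗ[K] H :=
    HB.str.toLinearMap ∘ₗ (TensorProduct.lid K H).toLinearMap ∘ₗ
      TensorProduct.map HB.counit LinearMap.id with hT₂
  have hkey := rb_sckeyB (HB := HB) (AA := AA) (AC := AC) (act := act)
    (coact := coact) (σ := σ) (m := m) (k := k) (B := B) (hB := hB)
    (T := (B.mul ∘ₗ rbF HB).compl₂ (rbG AA AC))
    (W := TensorProduct.map T₁ T₂)
    (hTW := by
      intro a₁ w v g₁ g₂
      simp only [LinearMap.compl₂_apply, LinearMap.comp_apply, rbF, rbG,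
        TensorProduct.map_tmul, LinearMap.id_coe, id_eq, LinearMap.smulRight_apply,
        tmul_smul, ← smul_tmul', map_smul, LinearMap.smul_apply]
      rw [rb_mul_b1_1g HB AA AC act coact σ m k hact B hB]
      simp only [hT₁, hT₂, hsHA, LinearMap.comp_apply, LinearEquiv.coe_coe,
        TensorProduct.map_tmul, LinearMap.id_coe, id_eq, TensorProduct.lid_tmul,
        TensorProduct.rid_tmul, map_smul, LinearMap.smul_apply, HB.counit_mul,
        rb_counit_zpowH, AC.counit_str, tmul_smul, ← smul_tmul', smul_smul]
      congr 1
      ring) (a := a) (h := h)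
  rw [hkey, TensorProduct.map_tmul]
  have h2 : T₂ (HB.comul h) = h := by
    rw [hT₂]
    simp only [LinearMap.comp_apply, LinearEquiv.coe_coe]
    rw [HB.counit_comul_left, LinearEquiv.apply_symm_apply]
  have h1 : T₁ (TensorProduct.map LinearMap.id coact (AC.comul a)) = a := by
    rw [hT₁]
    simp only [LinearMap.comp_apply, LinearEquiv.coe_coe]
    rw [aux_map_map, LinearMap.id_comp]
    have hs : sHA ∘ₗ coact = AC.counit := by
      apply LinearMap.ext; intro c
      rw [hsHA]
      simp only [LinearMap.comp_apply, LinearEquiv.coe_coe]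
      rw [hcc.counit_coact, rb_counitA_symm]
    rw [hs, AC.counit_comul_right, ← rb_strAC HB AA AC act coact σ m k hcc B hB,
      LinearEquiv.apply_symm_apply]
  rw [h1, h2, LinearMap.id_apply]

theorem rb_lift_compl₂ (SA : A →ₗ[K] A) (u : A ⊗[K] A) :
    TensorProduct.lift AA.mul (TensorProduct.map LinearMap.id SA u)
      = TensorProduct.lift (AA.mul.compl₂ SA) u := by
  induction u using TensorProduct.induction_on with
  | zero => simp
  | add x y hx hy => simp only [map_add, hx, hy]
  | tmul x y => simp

theorem rb_lift_comp (SA : A →ₗ[K] A) (u : A ⊗[K] A) :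
    TensorProduct.lift AA.mul (TensorProduct.map SA LinearMap.id u)
      = TensorProduct.lift (AA.mul ∘ₗ SA) u := by
  induction u using TensorProduct.induction_on with
  | zero => simp
  | add x y hx hy => simp only [map_add, hx, hy]
  | tmul x y => simp

theorem rb_conv_FF' (hact : IsWeakModuleAlgebra HB AA act)
    (hcc : IsComoduleCoalgebra HB AC coact)
    (B : HomBialgebraStr K (A ⊗[K] H))
    (hB : IsRadfordBiproduct HB AA AC act coact σ m k B)
    (SA : A →ₗ[K] A) (hSA : IsConvInvOfId AA AC SA) :
    hconv B (rbF HB) (rbF' HB SA) = hunit B := by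
  apply TensorProduct.ext'
  intro a h
  rw [hconv_apply]
  set T₁ : A ⊗[K] (H ⊗[K] A) →ₗ[K] A :=
    TensorProduct.lift AA.mul ∘ₗ
      TensorProduct.map LinearMap.id
        (SA ∘ₗ AC.str.toLinearMap ∘ₗ (TensorProduct.lid K A).toLinearMap ∘ₗ
          TensorProduct.map HB.counit LinearMap.id) with hT₁
  set T₂ : H ⊗[K] H →ₗ[K] H :=
    (HB.counit.smulRight HB.one) ∘ₗ (TensorProduct.lid K H).toLinearMap ∘ₗ
      TensorProduct.map HB.counit LinearMap.id with hT₂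
  have hkey := rb_sckeyB (HB := HB) (AA := AA) (AC := AC) (act := act)
    (coact := coact) (σ := σ) (m := m) (k := k) (B := B) (hB := hB)
    (T := (B.mul ∘ₗ rbF HB).compl₂ (rbF' HB SA))
    (W := TensorProduct.map T₁ T₂)
    (hTW := by
      intro a₁ w v g₁ g₂
      simp only [LinearMap.compl₂_apply, LinearMap.comp_apply, rbF, rbF',
        TensorProduct.map_tmul, LinearMap.id_coe, id_eq, LinearMap.smulRight_apply,
        tmul_smul, ← smul_tmul', map_smul, LinearMap.smul_apply]
      rw [rb_mul_b1c1 HB AA AC act coact σ m k hact B hB]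
      simp only [hT₁, hT₂, LinearMap.comp_apply, LinearEquiv.coe_coe,
        TensorProduct.map_tmul, LinearMap.id_coe, id_eq, TensorProduct.lid_tmul,
        TensorProduct.lift.tmul, map_smul, LinearMap.smul_apply, HB.counit_mul,
        rb_counit_zpowH, LinearMap.smulRight_apply, tmul_smul, ← smul_tmul', smul_smul]
      congr 1
      ring) (a := a) (h := h)
  rw [hkey, TensorProduct.map_tmul]
  have h2 : T₂ (HB.comul h) = HB.counit h • HB.one := by
    rw [hT₂]
    simp only [LinearMap.comp_apply, LinearEquiv.coe_coe]
    rw [HB.counit_comul_left, LinearMap.smulRight_apply, rb_counit_symmH]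
  have h1 : T₁ (TensorProduct.map LinearMap.id coact (AC.comul a))
      = AC.counit a • AA.one := by
    rw [hT₁]
    simp only [LinearMap.comp_apply]
    rw [aux_map_map, LinearMap.id_comp]
    have hs : (SA ∘ₗ AC.str.toLinearMap ∘ₗ (TensorProduct.lid K A).toLinearMap ∘ₗ
        TensorProduct.map HB.counit LinearMap.id) ∘ₗ coact = SA := by
      apply LinearMap.ext; intro c
      simp only [LinearMap.comp_apply, LinearEquiv.coe_coe]
      rw [hcc.counit_coact, LinearEquiv.apply_symm_apply]
    rw [hs, rb_lift_compl₂, hSA.2]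
  rw [h1, h2, hunit_apply, hB.counit_def, hB.one_def]
  simp only [tmul_smul, smul_tmul', smul_smul]
  rw [mul_comm]

theorem rb_conv_F'F (hact : IsWeakModuleAlgebra HB AA act)
    (hcc : IsComoduleCoalgebra HB AC coact)
    (B : HomBialgebraStr K (A ⊗[K] H))
    (hB : IsRadfordBiproduct HB AA AC act coact σ m k B)
    (SA : A →ₗ[K] A) (hSA : IsConvInvOfId AA AC SA) :
    hconv B (rbF' HB SA) (rbF HB) = hunit B := by
  apply TensorProduct.ext'
  intro a h
  rw [hconv_apply]
  set T₁ : A ⊗[K] (H ⊗[K] A) →ₗ[K] A :=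
    TensorProduct.lift AA.mul ∘ₗ
      TensorProduct.map SA
        (AC.str.toLinearMap ∘ₗ (TensorProduct.lid K A).toLinearMap ∘ₗ
          TensorProduct.map HB.counit LinearMap.id) with hT₁
  set T₂ : H ⊗[K] H →ₗ[K] H :=
    (HB.counit.smulRight HB.one) ∘ₗ (TensorProduct.lid K H).toLinearMap ∘ₗ
      TensorProduct.map HB.counit LinearMap.id with hT₂
  have hkey := rb_sckeyB (HB := HB) (AA := AA) (AC := AC) (act := act)
    (coact := coact) (σ := σ) (m := m) (k := k) (B := B) (hB := hB)
    (T := (B.mul ∘ₗ rbF' HB SA).compl₂ (rbF HB))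
    (W := TensorProduct.map T₁ T₂)
    (hTW := by
      intro a₁ w v g₁ g₂
      simp only [LinearMap.compl₂_apply, LinearMap.comp_apply, rbF, rbF',
        TensorProduct.map_tmul, LinearMap.id_coe, id_eq, LinearMap.smulRight_apply,
        tmul_smul, ← smul_tmul', map_smul, LinearMap.smul_apply]
      rw [rb_mul_b1c1 HB AA AC act coact σ m k hact B hB]
      simp only [hT₁, hT₂, LinearMap.comp_apply, LinearEquiv.coe_coe,
        TensorProduct.map_tmul, LinearMap.id_coe, id_eq, TensorProduct.lid_tmul,
        TensorProduct.lift.tmul, map_smul, LinearMap.smul_apply, HB.counit_mul,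
        rb_counit_zpowH, LinearMap.smulRight_apply, tmul_smul, ← smul_tmul', smul_smul]
      congr 1
      ring) (a := a) (h := h)
  rw [hkey, TensorProduct.map_tmul]
  have h2 : T₂ (HB.comul h) = HB.counit h • HB.one := by
    rw [hT₂]
    simp only [LinearMap.comp_apply, LinearEquiv.coe_coe]
    rw [HB.counit_comul_left, LinearMap.smulRight_apply, rb_counit_symmH]
  have h1 : T₁ (TensorProduct.map LinearMap.id coact (AC.comul a))
      = AC.counit a • AA.one := by
    rw [hT₁]
    simp only [LinearMap.comp_apply]
    rw [aux_map_map, LinearMap.comp_id]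
    have hs : (AC.str.toLinearMap ∘ₗ (TensorProduct.lid K A).toLinearMap ∘ₗ
        TensorProduct.map HB.counit LinearMap.id) ∘ₗ coact = LinearMap.id := by
      apply LinearMap.ext; intro c
      simp only [LinearMap.comp_apply, LinearEquiv.coe_coe, LinearMap.id_coe, id_eq]
      rw [hcc.counit_coact, LinearEquiv.apply_symm_apply]
    rw [hs, rb_lift_comp, hSA.1]
  rw [h1, h2, hunit_apply, hB.counit_def, hB.one_def]
  simp only [tmul_smul, smul_tmul', smul_smul]
  rw [mul_comm]

theorem rb_conv_GG' (hact : IsWeakModuleAlgebra HB AA act)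
    (hcc : IsComoduleCoalgebra HB AC coact)
    (B : HomBialgebraStr K (A ⊗[K] H))
    (hB : IsRadfordBiproduct HB AA AC act coact σ m k B)
    (SH : H →ₗ[K] H) (hSH : IsSigmaAntipode HB AA σ SH) :
    hconv B (rbG AA AC) (rbG' AA AC SH) = hunit B := by
  apply TensorProduct.ext'
  intro a h
  rw [hconv_apply]
  set T₉ : A ⊗[K] (H ⊗[K] A) →ₗ[K] H :=
    (TensorProduct.lid K H).toLinearMap ∘ₗ
      TensorProduct.map AC.counit
        ((TensorProduct.rid K H).toLinearMap ∘ₗ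
          TensorProduct.map LinearMap.id AC.counit) with hT₉
  set V₉ : H ⊗[K] (H ⊗[K] H) →ₗ[K] A ⊗[K] H :=
    TensorProduct.lift B.mul ∘ₗ
      TensorProduct.map
        ((TensorProduct.mk K A H AA.one) ∘ₗ TensorProduct.lift HB.mul ∘ₗ
          TensorProduct.map (HB.str ^ m).toLinearMap (HB.str ^ (-1:ℤ)).toLinearMap)
        ((TensorProduct.mk K A H AA.one) ∘ₗ SH) ∘ₗ
      (TensorProduct.assoc K H H H).symm.toLinearMap with hV₉
  have hkey := rb_sckeyB (HB := HB) (AA := AA) (AC := AC) (act := act)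
    (coact := coact) (σ := σ) (m := m) (k := k) (B := B) (hB := hB)
    (T := (B.mul ∘ₗ rbG AA AC).compl₂ (rbG' AA AC SH))
    (W := V₉ ∘ₗ TensorProduct.map T₉ LinearMap.id)
    (hTW := by
      intro a₁ w v g₁ g₂
      simp only [LinearMap.compl₂_apply, LinearMap.comp_apply, rbG, rbG', hT₉, hV₉,
        TensorProduct.map_tmul, LinearMap.id_coe, id_eq, LinearMap.smulRight_apply,
        LinearEquiv.coe_coe, TensorProduct.lid_tmul, TensorProduct.rid_tmul,
        TensorProduct.assoc_symm_tmul, TensorProduct.lift.tmul, TensorProduct.mk_apply,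
        AC.counit_str, map_smul, LinearMap.smul_apply, tmul_smul, ← smul_tmul',
        smul_smul]) (a := a) (h := h)
  rw [hkey, LinearMap.comp_apply, TensorProduct.map_tmul, LinearMap.id_coe, id_eq]
  have h1 : T₉ (TensorProduct.map LinearMap.id coact (AC.comul a))
      = AC.counit a • HB.one := by
    rw [hT₉]
    simp only [LinearMap.comp_apply, LinearEquiv.coe_coe]
    rw [aux_map_map, LinearMap.comp_id]
    have hs : ((TensorProduct.rid K H).toLinearMap ∘ₗ
        TensorProduct.map LinearMap.id AC.counit) ∘ₗ coact
        = AC.counit.smulRight HB.one := by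
      apply LinearMap.ext; intro c
      simp only [LinearMap.comp_apply, LinearEquiv.coe_coe, LinearMap.smulRight_apply]
      exact hcc.counit_coact_one c
    rw [hs, aux_double_counit, AC.counit_comul_right, rb_counitA_symm]
  rw [h1, ← smul_tmul', map_smul]
  have h2 : V₉ (HB.one ⊗ₜ[K] HB.comul h) = HB.counit h • (AA.one ⊗ₜ[K] HB.one) := by
    have hstage : ∀ z : H ⊗[K] H, V₉ (HB.one ⊗ₜ[K] z)
        = TensorProduct.lift B.mul
            (TensorProduct.map (TensorProduct.mk K A H AA.one)
              ((TensorProduct.mk K A H AA.one) ∘ₗ SH) z) := by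
      intro z
      induction z using TensorProduct.induction_on with
      | zero => simp
      | add z₁ z₂ hz₁ hz₂ => simp only [tmul_add, map_add, hz₁, hz₂]
      | tmul g₁ g₂ =>
          rw [hV₉]
          simp only [LinearMap.comp_apply, LinearEquiv.coe_coe,
            TensorProduct.assoc_symm_tmul, TensorProduct.map_tmul,
            TensorProduct.mk_apply, TensorProduct.lift.tmul]
          rw [rb_one_zpowH, HB.one_mul, ← aux_symm_zpow, LinearEquiv.apply_symm_apply]
    rw [hstage]
    exact rb_K1 HB AA AC act coact σ m k hact B hB SH hSH h
  rw [h2, hunit_apply, hB.counit_def, hB.one_def]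
  simp [smul_smul]

theorem rb_conv_G'G (hact : IsWeakModuleAlgebra HB AA act)
    (hcc : IsComoduleCoalgebra HB AC coact)
    (B : HomBialgebraStr K (A ⊗[K] H))
    (hB : IsRadfordBiproduct HB AA AC act coact σ m k B)
    (SH : H →ₗ[K] H) (hSH : IsSigmaAntipode HB AA σ SH) :
    hconv B (rbG' AA AC SH) (rbG AA AC) = hunit B := by
  apply TensorProduct.ext'
  intro a h
  rw [hconv_apply]
  set T₉ : A ⊗[K] (H ⊗[K] A) →ₗ[K] H :=
    (TensorProduct.lid K H).toLinearMap ∘ₗ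
      TensorProduct.map AC.counit
        ((TensorProduct.rid K H).toLinearMap ∘ₗ
          TensorProduct.map LinearMap.id AC.counit) with hT₉
  set V₉ : H ⊗[K] (H ⊗[K] H) →ₗ[K] A ⊗[K] H :=
    TensorProduct.lift B.mul ∘ₗ
      TensorProduct.map
        ((TensorProduct.mk K A H AA.one) ∘ₗ SH ∘ₗ TensorProduct.lift HB.mul ∘ₗ
          TensorProduct.map (HB.str ^ m).toLinearMap (HB.str ^ (-1:ℤ)).toLinearMap)
        (TensorProduct.mk K A H AA.one) ∘ₗ
      (TensorProduct.assoc K H H H).symm.toLinearMap with hV₉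
  have hkey := rb_sckeyB (HB := HB) (AA := AA) (AC := AC) (act := act)
    (coact := coact) (σ := σ) (m := m) (k := k) (B := B) (hB := hB)
    (T := (B.mul ∘ₗ rbG' AA AC SH).compl₂ (rbG AA AC))
    (W := V₉ ∘ₗ TensorProduct.map T₉ LinearMap.id)
    (hTW := by
      intro a₁ w v g₁ g₂
      simp only [LinearMap.compl₂_apply, LinearMap.comp_apply, rbG, rbG', hT₉, hV₉,
        TensorProduct.map_tmul, LinearMap.id_coe, id_eq, LinearMap.smulRight_apply,
        LinearEquiv.coe_coe, TensorProduct.lid_tmul, TensorProduct.rid_tmul,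
        TensorProduct.assoc_symm_tmul, TensorProduct.lift.tmul, TensorProduct.mk_apply,
        AC.counit_str, map_smul, LinearMap.smul_apply, tmul_smul, ← smul_tmul',
        smul_smul]) (a := a) (h := h)
  rw [hkey, LinearMap.comp_apply, TensorProduct.map_tmul, LinearMap.id_coe, id_eq]
  have h1 : T₉ (TensorProduct.map LinearMap.id coact (AC.comul a))
      = AC.counit a • HB.one := by
    rw [hT₉]
    simp only [LinearMap.comp_apply, LinearEquiv.coe_coe]
    rw [aux_map_map, LinearMap.comp_id]
    have hs : ((TensorProduct.rid K H).toLinearMap ∘ₗ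
        TensorProduct.map LinearMap.id AC.counit) ∘ₗ coact
        = AC.counit.smulRight HB.one := by
      apply LinearMap.ext; intro c
      simp only [LinearMap.comp_apply, LinearEquiv.coe_coe, LinearMap.smulRight_apply]
      exact hcc.counit_coact_one c
    rw [hs, aux_double_counit, AC.counit_comul_right, rb_counitA_symm]
  rw [h1, ← smul_tmul', map_smul]
  have h2 : V₉ (HB.one ⊗ₜ[K] HB.comul h) = HB.counit h • (AA.one ⊗ₜ[K] HB.one) := by
    have hstage : ∀ z : H ⊗[K] H, V₉ (HB.one ⊗ₜ[K] z)
        = TensorProduct.lift B.mul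
            (TensorProduct.map ((TensorProduct.mk K A H AA.one) ∘ₗ SH)
              (TensorProduct.mk K A H AA.one) z) := by
      intro z
      induction z using TensorProduct.induction_on with
      | zero => simp
      | add z₁ z₂ hz₁ hz₂ => simp only [tmul_add, map_add, hz₁, hz₂]
      | tmul g₁ g₂ =>
          rw [hV₉]
          simp only [LinearMap.comp_apply, LinearEquiv.coe_coe,
            TensorProduct.assoc_symm_tmul, TensorProduct.map_tmul,
            TensorProduct.mk_apply, TensorProduct.lift.tmul]
          rw [rb_one_zpowH, HB.one_mul, ← aux_symm_zpow, LinearEquiv.apply_symm_apply]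
    rw [hstage]
    exact rb_K2 HB AA AC act coact σ m k hact B hB SH hSH h
  rw [h2, hunit_apply, hB.counit_def, hB.one_def]
  simp [smul_smul]

theorem rb_S_formula (hcc : IsComoduleCoalgebra HB AC coact)
    (B : HomBialgebraStr K (A ⊗[K] H))
    (hB : IsRadfordBiproduct HB AA AC act coact σ m k B)
    (SH : H →ₗ[K] H) (SA : A →ₗ[K] A) (a : A) (h : H) :
    hconv B (rbG' AA AC SH) (rbF' HB SA) (a ⊗ₜ[K] h)
      = radfordAntipodeElem HB AA coact B.mul SH SA m a h := by
  rw [hconv_apply]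
  set U₁ : A ⊗[K] (H ⊗[K] A) →ₗ[K] H ⊗[K] A :=
    (TensorProduct.lid K (H ⊗[K] A)).toLinearMap ∘ₗ
      TensorProduct.map AC.counit LinearMap.id with hU₁
  set U₂ : H ⊗[K] H →ₗ[K] H :=
    (TensorProduct.rid K H).toLinearMap ∘ₗ
      TensorProduct.map LinearMap.id HB.counit with hU₂
  set V : (H ⊗[K] A) ⊗[K] H →ₗ[K] A ⊗[K] H :=
    TensorProduct.lift B.mul ∘ₗ
      TensorProduct.map
        ((TensorProduct.mk K A H AA.one) ∘ₗ SH ∘ₗ TensorProduct.lift HB.mul ∘ₗ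
          TensorProduct.map (HB.str ^ m).toLinearMap (HB.str ^ (-1:ℤ)).toLinearMap)
        (((TensorProduct.mk K A H).flip HB.one) ∘ₗ SA ∘ₗ AC.str.toLinearMap) ∘ₗ
      ((TensorProduct.assoc K H H A).symm.toLinearMap ∘ₗ
        TensorProduct.map LinearMap.id (TensorProduct.comm K A H).toLinearMap ∘ₗ
        (TensorProduct.assoc K H A H).toLinearMap) with hV
  have hkey := rb_sckeyB (HB := HB) (AA := AA) (AC := AC) (act := act)
    (coact := coact) (σ := σ) (m := m) (k := k) (B := B) (hB := hB)
    (T := (B.mul ∘ₗ rbG' AA AC SH).compl₂ (rbF' HB SA))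
    (W := V ∘ₗ TensorProduct.map U₁ U₂)
    (hTW := by
      intro a₁ w v g₁ g₂
      simp only [LinearMap.compl₂_apply, LinearMap.comp_apply, rbG', rbF', hU₁, hU₂, hV,
        TensorProduct.map_tmul, LinearMap.id_coe, id_eq, LinearMap.smulRight_apply,
        LinearEquiv.coe_coe, TensorProduct.lid_tmul, TensorProduct.rid_tmul,
        TensorProduct.assoc_tmul, TensorProduct.assoc_symm_tmul, TensorProduct.comm_tmul,
        TensorProduct.lift.tmul, TensorProduct.mk_apply, LinearMap.flip_apply,
        map_smul, LinearMap.smul_apply, tmul_smul, ← smul_tmul', smul_smul]) (a := a) (h := h)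
  rw [hkey, LinearMap.comp_apply, TensorProduct.map_tmul]
  have h2 : U₂ (HB.comul h) = HB.str.symm h := by
    rw [hU₂]
    simp only [LinearMap.comp_apply, LinearEquiv.coe_coe]
    exact HB.counit_comul_right h
  have h1 : U₁ (TensorProduct.map LinearMap.id coact (AC.comul a))
      = TensorProduct.map HB.str.symm.toLinearMap AC.str.symm.toLinearMap (coact a) := by
    rw [hU₁]
    simp only [LinearMap.comp_apply, LinearEquiv.coe_coe]
    rw [aux_map_map, LinearMap.comp_id, LinearMap.id_comp, aux_lid_nat,
      AC.counit_comul_left]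
    have h5 := hcc.coact_str (AC.str.symm a)
    rw [LinearEquiv.apply_symm_apply] at h5
    rw [h5, aux_map_map]
    have c1 : HB.str.symm.toLinearMap ∘ₗ HB.str.toLinearMap = LinearMap.id := by
      ext x; simp
    have c2 : AC.str.symm.toLinearMap ∘ₗ AC.str.toLinearMap = LinearMap.id := by
      ext x; simp
    rw [c1, c2, TensorProduct.map_id, LinearMap.id_apply]
  rw [h1, h2]
  have hfin : ∀ y : H ⊗[K] A,
      V ((TensorProduct.map HB.str.symm.toLinearMap AC.str.symm.toLinearMap y)
          ⊗ₜ[K] (HB.str.symm h))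
        = radfordAntipodeElem HB AA coact B.mul SH SA m a h
            - radfordAntipodeElem HB AA coact B.mul SH SA m a h
            + TensorProduct.lift B.mul
              (TensorProduct.map
                ((TensorProduct.mk K A H AA.one) ∘ₗ SH ∘ₗ
                  (HB.mul.flip ((HB.str ^ (-2 : ℤ)) h)) ∘ₗ (HB.str ^ (m - 1)).toLinearMap)
                (((TensorProduct.mk K A H).flip HB.one) ∘ₗ SA) y) := by
    intro y
    induction y using TensorProduct.induction_on with
    | zero => simp
    | add y₁ y₂ hy₁ hy₂ =>
        simp only [map_add, add_tmul, hy₁, hy₂] at *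
        abel
    | tmul w v =>
        rw [hV]
        simp only [LinearMap.comp_apply, LinearEquiv.coe_coe, TensorProduct.map_tmul,
          LinearMap.id_coe, id_eq, TensorProduct.assoc_tmul, TensorProduct.comm_tmul,
          TensorProduct.assoc_symm_tmul, TensorProduct.lift.tmul, TensorProduct.mk_apply,
          LinearMap.flip_apply, LinearEquiv.apply_symm_apply]
        rw [aux_symm_zpow HB.str h, aux_symm_zpow HB.str w, aux_zpow_app, aux_zpow_app,
          show m + (-1:ℤ) = m - 1 by ring, show (-1:ℤ) + (-1:ℤ) = -2 by ring]
        abel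
  rw [hfin (coact a)]
  simp only [radfordAntipodeElem]
  abel

end Concrete

/-- Theorem 3.5: the Radford `[(m,k),m]`-biproduct is a monoidal Hom-Hopf algebra with the
stated antipode. -/
theorem radford_biproduct_hopf
    {K H A : Type*} [Field K] [AddCommGroup H] [Module K H] [AddCommGroup A] [Module K A]
    (HB : HomBialgebraStr K H) (AA : HomAlgebraStr K A) (AC : HomCoalgebraStr K A)
    (act : H →ₗ[K] A →ₗ[K] A) (hact : IsWeakModuleAlgebra HB AA act)
    (coact : A →ₗ[K] H ⊗[K] A) (hcc : IsComoduleCoalgebra HB AC coact)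
    (σ : H →ₗ[K] H →ₗ[K] A) (m k : ℤ)
    (B : HomBialgebraStr K (A ⊗[K] H))
    (hB : IsRadfordBiproduct HB AA AC act coact σ m k B)
    (SH : H →ₗ[K] H) (hSH : IsSigmaAntipode HB AA σ SH)
    (SA : A →ₗ[K] A) (hSA : IsConvInvOfId AA AC SA)
    (hSAstr : ∀ a : A, SA (AA.str a) = AA.str (SA a)) :
    ∃ HS : HomHopfStr K (A ⊗[K] H),
      HS.toHomBialgebraStr = B
      ∧ ∀ (a : A) (h : H),
          HS.antipode (a ⊗ₜ[K] h) = radfordAntipodeElem HB AA coact B.mul SH SA m a h := by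
  have eF : HEquivar B (rbF HB) :=
    rb_equivar_of_comps HB AA AC act coact σ m k B hB (fun _ => rfl) (rb_smulRightH_str HB)
  have eG : HEquivar B (rbG AA AC) :=
    rb_equivar_of_comps HB AA AC act coact σ m k B hB
      (fun b => rb_smulRightA_str HB AA AC act coact σ m k hcc B hB b) (fun _ => rfl)
  have eF' : HEquivar B (rbF' HB SA) :=
    rb_equivar_of_comps HB AA AC act coact σ m k B hB hSAstr (rb_smulRightH_str HB)
  have eG' : HEquivar B (rbG' AA AC SH) :=
    rb_equivar_of_comps HB AA AC act coact σ m k B hB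
      (fun b => rb_smulRightA_str HB AA AC act coact σ m k hcc B hB b) hSH.antipode_str
  have e1 := rb_conv_FG HB AA AC act coact σ m k hact hcc B hB
  have e2 := rb_conv_FF' HB AA AC act coact σ m k hact hcc B hB SA hSA
  have e3 := rb_conv_F'F HB AA AC act coact σ m k hact hcc B hB SA hSA
  have e4 := rb_conv_GG' HB AA AC act coact σ m k hact hcc B hB SH hSH
  have e5 := rb_conv_G'G HB AA AC act coact σ m k hact hcc B hB SH hSH
  set S : A ⊗[K] H →ₗ[K] A ⊗[K] H := hconv B (rbG' AA AC SH) (rbF' HB SA) with hS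
  have eS : HEquivar B S := hconv_equivar B eG' eF'
  have eFG : HEquivar B (hconv B (rbF HB) (rbG AA AC)) := hconv_equivar B eF eG
  have hleft : hconv B S LinearMap.id = hunit B := by
    calc hconv B S LinearMap.id
        = hconv B S (hconv B (rbF HB) (rbG AA AC)) := by rw [e1]
      _ = hconv B (rbG' AA AC SH)
            (hconv B (rbF' HB SA) (hconv B (rbF HB) (rbG AA AC))) :=
          hconv_assoc B eG' eFG
      _ = hconv B (rbG' AA AC SH)
            (hconv B (hconv B (rbF' HB SA) (rbF HB)) (rbG AA AC)) := by
          rw [hconv_assoc B eF' eG]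
      _ = hconv B (rbG' AA AC SH) (hconv B (hunit B) (rbG AA AC)) := by rw [e3]
      _ = hconv B (rbG' AA AC SH) (rbG AA AC) := by rw [hunit_hconv B eG]
      _ = hunit B := e5
  have hright : hconv B LinearMap.id S = hunit B := by
    calc hconv B LinearMap.id S
        = hconv B (hconv B (rbF HB) (rbG AA AC)) S := by rw [e1]
      _ = hconv B (rbF HB) (hconv B (rbG AA AC) S) := hconv_assoc B eF eS
      _ = hconv B (rbF HB)
            (hconv B (hconv B (rbG AA AC) (rbG' AA AC SH)) (rbF' HB SA)) := by
          rw [hconv_assoc B eG eF']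
      _ = hconv B (rbF HB) (hconv B (hunit B) (rbF' HB SA)) := by rw [e4]
      _ = hconv B (rbF HB) (rbF' HB SA) := by rw [hunit_hconv B eF']
      _ = hunit B := e2
  refine ⟨{ toHomBialgebraStr := B
            antipode := S
            antipode_str := eS
            antipode_mul_left := ?_
            antipode_mul_right := ?_ }, rfl, ?_⟩
  · intro x
    have hx := LinearMap.congr_fun hleft x
    rw [hconv_apply, LinearMap.compl₂_id, hunit_apply] at hx
    exact hx
  · intro x
    have hx := LinearMap.congr_fun hright x
    rw [hconv_apply, LinearMap.comp_id, hunit_apply] at hx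
    exact hx
  · intro a h
    exact rb_S_formula HB AA AC act coact σ m k hcc B hB SH SA a h
end
end
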